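/- arXiv:1512.01821 — 4 statements merged into one kernel-verified Lean document; each statement's English description precedes it below -/
import Mathlib

section
/- Let G be a graph, O a fourientation of G, u ≠ v vertices, P₁ a potential path of O from v to u, and P₂ a potential path of O from u to v. Then for every edge e that is oriented in O and appears in the closed walk P₁P₂, there exists a potential cycle Cy of O with e ∈ Cy and Cy contained in the edge set of P₁P₂. Moreover, if a bioriented edge e′ appears in Cy, then the orientation of e′ consistent with the direction of Cy is consistent with the direction of at least one of P₁, P₂. -/
open scoped Classical

/-- A multigraph with a fixed reference orientation: each edge `e` has a
source `src e` and a target `tgt e` (the positive direction `e⁺ = (src e, tgt e)`). -/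
structure MGraph (V E : Type) where
  src : E → V
  tgt : E → V

namespace MGraph

variable {V E : Type} (G : MGraph V E)

/-- Two vertices are joined by some edge of `S`. -/
def step (S : Set E) (a b : V) : Prop :=
  ∃ e ∈ S, (G.src e = a ∧ G.tgt e = b) ∨ (G.src e = b ∧ G.tgt e = a)

/-- `κ(S)`: the number of connected components of the spanning subgraph `(V, S)`. -/
noncomputable def kappa (S : Set E) : ℕ :=
  Nat.card (Quot (G.step S))

/-- A cut of `G`: a minimal nonempty edge set whose removal increases the
number of connected components. -/
def IsCut (C : Set E) : Prop :=
  C.Nonempty ∧ G.kappa Cᶜ > G.kappa Set.univ ∧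
    ∀ C' : Set E, C' ⊂ C → C'.Nonempty → ¬ (G.kappa C'ᶜ > G.kappa Set.univ)

/-- A cycle of `G`: a minimal nonempty edge set meeting no cut of `G` in
precisely one element. -/
def IsCycle (C : Set E) : Prop :=
  C.Nonempty ∧ (∀ Cu : Set E, G.IsCut Cu → (Cu ∩ C).ncard ≠ 1) ∧
    ∀ C' : Set E, C' ⊂ C → C'.Nonempty →
      ¬ (∀ Cu : Set E, G.IsCut Cu → (Cu ∩ C').ncard ≠ 1)

/-- Head of edge `e` under orientation `O` (`O e = true` means the reference
direction `src e → tgt e`). -/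
def ohead (O : E → Bool) (e : E) : V := if O e then G.tgt e else G.src e

/-- Tail of edge `e` under orientation `O`. -/
def otail (O : E → Bool) (e : E) : V := if O e then G.src e else G.tgt e

/-- Edge `e` crosses the vertex set `U` (exactly one endpoint in `U`). -/
def crossing (U : Set V) (e : E) : Prop := G.src e ∈ U ↔ G.tgt e ∉ U

/-- A directed cut of the orientation `O`: a cut all of whose edges are
oriented consistently out of some vertex set `U`. -/
def IsDirCut (O : E → Bool) (C : Set E) : Prop :=
  G.IsCut C ∧ ∃ U : Set V, (∀ e, e ∈ C ↔ G.crossing U e) ∧ ∀ e ∈ C, G.otail O e ∈ U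

/-- A directed cycle of the orientation `O`: a cycle oriented consistently,
i.e. in-degree equals out-degree at each vertex within the cycle. -/
def IsDirCycle (O : E → Bool) (C : Set E) : Prop :=
  G.IsCycle C ∧ ∀ v : V,
    {e ∈ C | G.ohead O e = v}.ncard = {e ∈ C | G.otail O e = v}.ncard

section Activities

variable [LinearOrder E]

/-- `Î(S)`: cut active edges of the spanning subgraph `S`. -/
def Iact (S : Set E) : Set E :=
  {e | ∃ C : Set E, G.IsCut C ∧ e ∈ C ∧ (∀ f ∈ C, f ≠ e → f ∉ S) ∧ ∀ f ∈ C, e ≤ f}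

/-- `L̂(S)`: cycle active edges of the spanning subgraph `S`. -/
def Lact (S : Set E) : Set E :=
  {e | ∃ C : Set E, G.IsCycle C ∧ e ∈ C ∧ (∀ f ∈ C, f = e ∨ f ∈ S) ∧ ∀ f ∈ C, e ≤ f}

/-- `I(O)`: cut active edges of the orientation `O`. -/
def Ior (O : E → Bool) : Set E :=
  {e | ∃ C : Set E, G.IsDirCut O C ∧ e ∈ C ∧ ∀ f ∈ C, e ≤ f}

/-- `L(O)`: cycle active edges of the orientation `O`. -/
def Lor (O : E → Bool) : Set E :=
  {e | ∃ C : Set E, G.IsDirCycle O C ∧ e ∈ C ∧ ∀ f ∈ C, e ≤ f}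

end Activities

/-- The Tutte polynomial via the corank-nullity expansion, evaluated in a
commutative ring. -/
noncomputable def tutte [Fintype V] [Fintype E] (R : Type) [CommRing R] (x y : R) : R :=
  ∑ S : Finset E, (x - 1) ^ (G.kappa ↑S - G.kappa Set.univ) *
    (y - 1) ^ (S.card + G.kappa ↑S - Fintype.card V)

/-! ### Fourientations.
A fourientation is `F : E → Bool × Bool`, recording whether `e⁺` resp. `e⁻`
belongs to the fourientation. -/

/-- A potential cut of the fourientation `F`: a directed cut each of whose
edges is unoriented in `F` or oriented in the cut direction (out of `U`). -/
def PotCut (F : E → Bool × Bool) (C : Set E) : Prop :=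
  G.IsCut C ∧ ∃ U : Set V, (∀ e, e ∈ C ↔ G.crossing U e) ∧
    ∀ e ∈ C, (G.src e ∈ U → (F e).2 = false) ∧ (G.src e ∉ U → (F e).1 = false)

/-- A potential cycle of the fourientation `F`, with cyclic direction `dir`:
a consistently directed cycle each of whose edges has its `dir`-direction
present in `F` (so each edge is bioriented or oriented in the cycle direction). -/
def PotCycle (F : E → Bool × Bool) (C : Set E) (dir : E → Bool) : Prop :=
  G.IsCycle C ∧
    (∀ v : V, {e ∈ C | G.ohead dir e = v}.ncard = {e ∈ C | G.otail dir e = v}.ncard) ∧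
    ∀ e ∈ C, (if dir e then (F e).1 else (F e).2) = true

/-- Add the direction `d` of edge `e` to the fourientation `F`. -/
def addDir [DecidableEq E] (F : E → Bool × Bool) (e : E) (d : Bool) : E → Bool × Bool :=
  Function.update F e (if d then (true, (F e).2) else ((F e).1, true))

/-- Remove the direction `d` of edge `e` from the fourientation `F`. -/
def remDir [DecidableEq E] (F : E → Bool × Bool) (e : E) (d : Bool) : E → Bool × Bool :=
  Function.update F e (if d then (false, (F e).2) else ((F e).1, false))

/-- `ᵉO`: toggle the status of the edge `e` in the fourientation `F`. -/
def toggle [DecidableEq E] (F : E → Bool × Bool) (e : E) : E → Bool × Bool :=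
  Function.update F e ((F e).2, (F e).1)

section FourActivities

variable [LinearOrder E]

/-- `I^o(O)`: oriented edges that are minimal in some potential cut. -/
def Io (F : E → Bool × Bool) : Set E :=
  {f | (F f).1 ≠ (F f).2 ∧ ∃ C : Set E, G.PotCut F C ∧ f ∈ C ∧ ∀ g ∈ C, f ≤ g}

/-- `L^o(O)`: oriented edges that are minimal in some potential cycle. -/
def Lo (F : E → Bool × Bool) : Set E :=
  {f | (F f).1 ≠ (F f).2 ∧
    ∃ (C : Set E) (dir : E → Bool), G.PotCycle F C dir ∧ f ∈ C ∧ ∀ g ∈ C, f ≤ g}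

/-- `I^u(O)`: unoriented edges `f` minimal in some potential cut of
`O ∪ {f^{σᵤ(f)}}`. -/
def Iu (σu : E → Bool) (F : E → Bool × Bool) : Set E :=
  {f | F f = (false, false) ∧
    ∃ C : Set E, G.PotCut (addDir F f (σu f)) C ∧ f ∈ C ∧ ∀ g ∈ C, f ≤ g}

/-- `L^b(O)`: bioriented edges `f` minimal in some potential cycle of
`O \ {f^{σ_b(f)}}`. -/
def Lb (σb : E → Bool) (F : E → Bool × Bool) : Set E :=
  {f | F f = (true, true) ∧
    ∃ (C : Set E) (dir : E → Bool),
      G.PotCycle (remDir F f (σb f)) C dir ∧ f ∈ C ∧ ∀ g ∈ C, f ≤ g}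

end FourActivities

/-- The deletion `G − e`. -/
def del (e : E) : MGraph V {f : E // f ≠ e} :=
  ⟨fun f => G.src f.1, fun f => G.tgt f.1⟩

/-- The contraction `G/e`: identify the endpoints of `e` and remove `e`. -/
def contr (e : E) : MGraph (Quot (fun a b => a = G.src e ∧ b = G.tgt e)) {f : E // f ≠ e} :=
  ⟨fun f => Quot.mk _ (G.src f.1), fun f => Quot.mk _ (G.tgt f.1)⟩

/-! ### Potential walks in a fourientation. A walk step is a pair `(e, d)` of an
edge and a chosen direction (`d = true` for the reference direction). -/

/-- Tail of the directed edge `(e, d)`. -/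
def ftail (p : E × Bool) : V := if p.2 then G.src p.1 else G.tgt p.1

/-- Head of the directed edge `(e, d)`. -/
def fhead (p : E × Bool) : V := if p.2 then G.tgt p.1 else G.src p.1

/-- The direction `d` of `e` is present in the fourientation `F`. -/
def present (F : E → Bool × Bool) (p : E × Bool) : Prop :=
  (if p.2 then (F p.1).1 else (F p.1).2) = true

/-- A potential walk of the fourientation `F` from `a` to `b`: each step uses
a direction present in `F` (so each edge is bioriented or oriented
consistently with the walk). -/
def IsPWalk (F : E → Bool × Bool) : V → List (E × Bool) → V → Prop
  | a, [], b => a = b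
  | a, p :: rest, b => G.ftail p = a ∧ present F p ∧ IsPWalk F (G.fhead p) rest b

/-- A potential path: a potential walk visiting pairwise distinct vertices. -/
def IsPPath (F : E → Bool × Bool) (a : V) (w : List (E × Bool)) (b : V) : Prop :=
  G.IsPWalk F a w b ∧ (a :: w.map G.fhead).Nodup

end MGraph


namespace MGraph

variable {V E : Type} (G : MGraph V E)

/-- Connectivity in the spanning subgraph with edge set `S`. -/
def conn (S : Set E) (a b : V) : Prop :=
  Quot.mk (G.step S) a = Quot.mk (G.step S) b

variable {G}

lemma conn_refl {S : Set E} (a : V) : G.conn S a a := rfl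

lemma conn_symm {S : Set E} {a b : V} (h : G.conn S a b) : G.conn S b a := h.symm

lemma conn_trans {S : Set E} {a b c : V} (h1 : G.conn S a b) (h2 : G.conn S b c) :
    G.conn S a c := h1.trans h2

lemma step_mono {S T : Set E} (h : S ⊆ T) {a b : V} (hs : G.step S a b) : G.step T a b := by
  obtain ⟨e, he, h'⟩ := hs; exact ⟨e, h he, h'⟩

lemma conn_mono {S T : Set E} (h : S ⊆ T) {a b : V} (hc : G.conn S a b) : G.conn T a b := by
  rw [conn, Quot.eq] at hc ⊢
  exact hc.mono fun a b => step_mono h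

lemma conn_of_mem {S : Set E} {e : E} (he : e ∈ S) : G.conn S (G.src e) (G.tgt e) :=
  Quot.sound ⟨e, he, Or.inl ⟨rfl, rfl⟩⟩

lemma conn_endpoints {S : Set E} {e : E} {a b : V} (he : e ∈ S)
    (h : (G.src e = a ∧ G.tgt e = b) ∨ (G.src e = b ∧ G.tgt e = a)) : G.conn S a b := by
  rcases h with ⟨h1, h2⟩ | ⟨h1, h2⟩
  · exact h1 ▸ h2 ▸ conn_of_mem he
  · exact h1 ▸ h2 ▸ (conn_of_mem he).symm

lemma finite_quot [Finite V] (S : Set E) : Finite (Quot (G.step S)) :=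
  Finite.of_surjective _ (Quot.mk_surjective (r := G.step S))

lemma kappa_le [Finite V] {S T : Set E} (h : S ⊆ T) : G.kappa T ≤ G.kappa S := by
  haveI := finite_quot (G := G) S
  exact Nat.card_le_card_of_surjective
    (fun x : Quot (G.step S) =>
      Quot.lift (fun v => Quot.mk (G.step T) v)
        (fun a b hab => Quot.sound (step_mono h hab)) x)
    (fun y => by obtain ⟨v, rfl⟩ := Quot.exists_rep y; exact ⟨Quot.mk _ v, rfl⟩)

lemma kappa_eq_of_conn [Finite V] {S T : Set E} (hst : S ⊆ T)
    (h : ∀ e ∈ T, G.conn S (G.src e) (G.tgt e)) : G.kappa S = G.kappa T := by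
  haveI := finite_quot (G := G) T
  refine le_antisymm ?_ (kappa_le hst)
  have key : ∀ a b, G.step T a b → Quot.mk (G.step S) a = Quot.mk (G.step S) b := by
    intro a b hab
    obtain ⟨e, he, h'⟩ := hab
    rcases h' with ⟨h1, h2⟩ | ⟨h1, h2⟩
    · exact h1 ▸ h2 ▸ h e he
    · exact h1 ▸ h2 ▸ (h e he).symm
  exact Nat.card_le_card_of_surjective
    (fun x : Quot (G.step T) => Quot.lift (fun v => Quot.mk (G.step S) v) key x)
    (fun y => by obtain ⟨v, rfl⟩ := Quot.exists_rep y; exact ⟨Quot.mk _ v, rfl⟩)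

lemma kappa_lt [Finite V] {S T : Set E} (hst : S ⊆ T) {a b : V}
    (hne : ¬ G.conn S a b) (hc : G.conn T a b) : G.kappa T < G.kappa S := by
  haveI := finite_quot (G := G) S
  haveI := finite_quot (G := G) T
  haveI : Fintype (Quot (G.step S)) := Fintype.ofFinite _
  haveI : Fintype (Quot (G.step T)) := Fintype.ofFinite _
  set f : Quot (G.step S) -> Quot (G.step T) := fun x =>
    Quot.lift (fun v => Quot.mk (G.step T) v)
      (fun a b hab => Quot.sound (step_mono hst hab)) x with hf
  have hsurj : Function.Surjective f := by
    intro y; obtain ⟨v, rfl⟩ := Quot.exists_rep y; exact ⟨Quot.mk _ v, rfl⟩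
  have hfa : f (Quot.mk _ a) = f (Quot.mk _ b) := hc
  -- section
  set s : Quot (G.step T) -> Quot (G.step S) := Function.surjInv hsurj with hs
  have hinj : Function.Injective s := Function.injective_surjInv hsurj
  have hnotmem : (Quot.mk (G.step S) a) ∉ Set.range s ∨ (Quot.mk (G.step S) b) ∉ Set.range s := by
    by_contra hcon
    push_neg at hcon
    obtain ⟨⟨y1, hy1⟩, ⟨y2, hy2⟩⟩ := hcon
    have e1 : y1 = f (Quot.mk (G.step S) a) := by
      rw [← hy1]; exact (Function.rightInverse_surjInv hsurj y1).symm
    have e2 : y2 = f (Quot.mk (G.step S) b) := by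
      rw [← hy2]; exact (Function.rightInverse_surjInv hsurj y2).symm
    apply hne
    show Quot.mk (G.step S) a = Quot.mk (G.step S) b
    rw [← hy1, ← hy2, e1, e2, hfa]
  have : Fintype.card (Quot (G.step T)) < Fintype.card (Quot (G.step S)) := by
    rcases hnotmem with hm | hm
    · exact Fintype.card_lt_of_injective_of_notMem s hinj hm
    · exact Fintype.card_lt_of_injective_of_notMem s hinj hm
  simpa [kappa, Nat.card_eq_fintype_card] using this

end MGraph

namespace MGraph

variable {V E : Type} {G : MGraph V E}

lemma not_conn_of_noncrossing {S : Set E} {A : Set V}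
    (hS : ∀ h ∈ S, (G.src h ∈ A ↔ G.tgt h ∈ A)) {a b : V} (ha : a ∈ A) (hb : b ∉ A) :
    ¬ G.conn S a b := by
  intro h
  have key : ∀ x y : V, Quot.mk (G.step S) x = Quot.mk (G.step S) y → (x ∈ A ↔ y ∈ A) := by
    intro x y hxy
    rw [Quot.eq] at hxy
    induction hxy with
    | rel x y hstep =>
      obtain ⟨e, heS, h'⟩ := hstep
      rcases h' with ⟨h1, h2⟩ | ⟨h1, h2⟩
      · rw [← h1, ← h2]; exact hS e heS
      · rw [← h1, ← h2]; exact (hS e heS).symm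
    | refl x => exact Iff.rfl
    | symm x y _ ih => exact ih.symm
    | trans x y z _ _ ih1 ih2 => exact ih1.trans ih2
  exact hb ((key _ _ h).mp ha)

lemma conn_insert_decomp {S : Set E} {g : E} {a b : V}
    (h : G.conn (insert g S) a b) :
    G.conn S a b ∨ (G.conn S a (G.src g) ∧ G.conn S (G.tgt g) b) ∨
      (G.conn S a (G.tgt g) ∧ G.conn S (G.src g) b) := by
  rw [conn, Quot.eq] at h
  induction h with
  | rel x y hstep =>
    obtain ⟨e, he, h'⟩ := hstep
    rcases he with rfl | heS
    · rcases h' with ⟨h1, h2⟩ | ⟨h1, h2⟩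
      · exact Or.inr (Or.inl ⟨by rw [h1]; exact conn_refl _, by rw [h2]; exact conn_refl _⟩)
      · exact Or.inr (Or.inr ⟨by rw [h2]; exact conn_refl _, by rw [h1]; exact conn_refl _⟩)
    · exact Or.inl (conn_endpoints heS h')
  | refl x => exact Or.inl (conn_refl x)
  | symm x y _ ih =>
    rcases ih with h1 | ⟨h1, h2⟩ | ⟨h1, h2⟩
    · exact Or.inl h1.symm
    · exact Or.inr (Or.inr ⟨h2.symm, h1.symm⟩)
    · exact Or.inr (Or.inl ⟨h2.symm, h1.symm⟩)
  | trans x y z _ _ ih1 ih2 =>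
    rcases ih1 with h1 | ⟨h1, h2⟩ | ⟨h1, h2⟩ <;>
      rcases ih2 with h3 | ⟨h3, h4⟩ | ⟨h3, h4⟩
    · exact Or.inl (conn_trans h1 h3)
    · exact Or.inr (Or.inl ⟨conn_trans h1 h3, h4⟩)
    · exact Or.inr (Or.inr ⟨conn_trans h1 h3, h4⟩)
    · exact Or.inr (Or.inl ⟨h1, conn_trans h2 h3⟩)
    · exact Or.inl (conn_trans h1 (conn_trans (conn_symm h3) (conn_trans (conn_symm h2) h4)))
    · exact Or.inl (conn_trans h1 h4)
    · exact Or.inr (Or.inr ⟨h1, conn_trans h2 h3⟩)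
    · exact Or.inl (conn_trans h1 h4)
    · exact Or.inl (conn_trans h1 (conn_trans (conn_symm h3) (conn_trans (conn_symm h2) h4)))

/-! ### Walk lemmas -/

lemma IsPWalk.present_of_mem {F : E → Bool × Bool} {a b : V} {w : List (E × Bool)}
    (h : G.IsPWalk F a w b) {q : E × Bool} (hq : q ∈ w) : present F q := by
  induction w generalizing a with
  | nil => cases hq
  | cons r rest ih =>
    obtain ⟨_, hpres, hrest⟩ := h
    rcases List.mem_cons.mp hq with rfl | hq
    · exact hpres
    · exact ih hrest hq

lemma IsPWalk.append {F : E → Bool × Bool} {a c b : V} {w₁ w₂ : List (E × Bool)}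
    (h1 : G.IsPWalk F a w₁ c) (h2 : G.IsPWalk F c w₂ b) : G.IsPWalk F a (w₁ ++ w₂) b := by
  induction w₁ generalizing a with
  | nil => rwa [show a = c from h1]
  | cons q rest ih =>
    obtain ⟨hq, hpres, hrest⟩ := h1
    exact ⟨hq, hpres, ih hrest⟩

lemma IsPWalk.split {F : E → Bool × Bool} {a b : V} {w₁ w₂ : List (E × Bool)}
    (h : G.IsPWalk F a (w₁ ++ w₂) b) : ∃ c, G.IsPWalk F a w₁ c ∧ G.IsPWalk F c w₂ b := by
  induction w₁ generalizing a with
  | nil => exact ⟨a, rfl, h⟩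
  | cons q rest ih =>
    obtain ⟨hq, hpres, hrest⟩ := h
    obtain ⟨c, hc1, hc2⟩ := ih hrest
    exact ⟨c, ⟨hq, hpres, hc1⟩, hc2⟩

lemma IsPWalk.tails_concat {F : E → Bool × Bool} {a b : V} {w : List (E × Bool)}
    (h : G.IsPWalk F a w b) : w.map G.ftail ++ [b] = a :: w.map G.fhead := by
  induction w generalizing a with
  | nil => rw [show a = b from h]; rfl
  | cons q rest ih =>
    obtain ⟨hq, _, hrest⟩ := h
    simpa [hq] using ih hrest

lemma IsPWalk.conn_of_edges {F : E → Bool × Bool} {a b : V} {w : List (E × Bool)} {S : Set E}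
    (h : G.IsPWalk F a w b) (hS : ∀ q ∈ w, q.1 ∈ S) : G.conn S a b := by
  induction w generalizing a with
  | nil => exact (show a = b from h) ▸ conn_refl a
  | cons q rest ih =>
    obtain ⟨hq, _, hrest⟩ := h
    refine conn_trans ?_ (ih hrest fun r hr => hS r (List.mem_cons_of_mem _ hr))
    have hmem : q.1 ∈ S := hS q (List.mem_cons_self)
    refine conn_endpoints hmem ?_
    rw [← hq]
    unfold MGraph.ftail MGraph.fhead
    cases hqd : q.2 <;> simp

end MGraph

namespace MGraph

variable {V E : Type} {G : MGraph V E}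

/-- Every walk contains a path with the same endpoints, using a subset of the steps. -/
lemma exists_path (F : E → Bool × Bool) :
    ∀ (n : ℕ) (w : List (E × Bool)) (a b : V), w.length ≤ n → G.IsPWalk F a w b →
      ∃ w', G.IsPWalk F a w' b ∧ (a :: w'.map G.fhead).Nodup ∧ ∀ q ∈ w', q ∈ w := by
  intro n
  induction n with
  | zero =>
    intro w a b hl hw
    rw [Nat.le_zero, List.length_eq_zero_iff] at hl
    subst hl
    exact ⟨[], hw, by simp, by simp⟩
  | succ n ih =>
    intro w a b hl hw
    by_cases hmem : a ∈ w.map G.fhead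
    · obtain ⟨q, hq, hfq⟩ := List.mem_map.mp hmem
      obtain ⟨w₁, w₂, rfl⟩ := List.append_of_mem hq
      have hre : w₁ ++ q :: w₂ = (w₁ ++ [q]) ++ w₂ := by simp
      rw [hre] at hw
      obtain ⟨c, hc1, hc2⟩ := hw.split
      obtain ⟨d, _, hd2⟩ := hc1.split
      obtain ⟨hd3, _, hd5⟩ := hd2
      have hca : c = a := by rw [← hfq]; exact (show G.fhead q = c from hd5).symm ▸ rfl
      subst hca
      have hlen : w₂.length ≤ n := by
        have := hl
        simp only [List.length_append, List.length_cons] at this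
        omega
      obtain ⟨w', h1, h2, h3⟩ := ih w₂ c b hlen hc2
      exact ⟨w', h1, h2, fun r hr => by simp [h3 r hr]⟩
    · cases w with
      | nil => exact ⟨[], hw, by simp, by simp⟩
      | cons q rest =>
        obtain ⟨hqa, hpres, hrest⟩ := hw
        have hlen : rest.length ≤ n := by simpa using Nat.le_of_succ_le_succ hl
        obtain ⟨w', h1, h2, h3⟩ := ih rest (G.fhead q) b hlen hrest
        refine ⟨q :: w', ⟨hqa, hpres, h1⟩, ?_, ?_⟩
        · rw [List.map_cons, List.nodup_cons]
          refine ⟨?_, h2⟩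
          intro hcon
          apply hmem
          rcases List.mem_cons.mp hcon with heq | hmem'
          · exact heq ▸ List.mem_map_of_mem (f := G.fhead) (List.mem_cons_self)
          · obtain ⟨r, hr, hfr⟩ := List.mem_map.mp hmem'
            exact hfr ▸ List.mem_map_of_mem (f := G.fhead) (List.mem_cons_of_mem q (h3 r hr))
        · intro r hr
          rcases List.mem_cons.mp hr with rfl | hr'
          · exact List.mem_cons_self
          · exact List.mem_cons_of_mem _ (h3 r hr')

/-- Every closed walk through a step `p` contains a simple closed walk through `p`. -/
lemma exists_simple_closed {F : E → Bool × Bool} {p : E × Bool} {w : List (E × Bool)}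
    (hw : G.IsPWalk F (G.fhead p) w (G.ftail p)) (hp : present F p) :
    ∃ w', G.IsPWalk F (G.ftail p) (p :: w') (G.ftail p) ∧
      ((p :: w').map G.ftail).Nodup ∧ ∀ q ∈ w', q ∈ w := by
  obtain ⟨w', h1, h2, h3⟩ := exists_path F w.length w (G.fhead p) (G.ftail p) le_rfl hw
  refine ⟨w', ⟨rfl, hp, h1⟩, ?_, h3⟩
  have hconcat := h1.tails_concat
  rw [← hconcat] at h2
  rw [List.nodup_append] at h2
  obtain ⟨hnd, _, hdisj⟩ := h2
  rw [List.map_cons, List.nodup_cons]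
  exact ⟨fun hc => hdisj _ hc _ (by simp) rfl, hnd⟩

end MGraph

namespace MGraph

variable {V E : Type} {G : MGraph V E}

lemma heads_perm_tails {F : E → Bool × Bool} {a : V} {l : List (E × Bool)}
    (hl : G.IsPWalk F a l a) : (l.map G.fhead).Perm (l.map G.ftail) := by
  have h := hl.tails_concat
  have : (a :: l.map G.fhead).Perm (a :: l.map G.ftail) := by
    rw [← h]
    exact List.perm_append_singleton a (l.map G.ftail)
  exact (List.perm_cons a).mp this

lemma heads_nodup {F : E → Bool × Bool} {a : V} {l : List (E × Bool)}
    (hl : G.IsPWalk F a l a) (hnd : (l.map G.ftail).Nodup) : (l.map G.fhead).Nodup :=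
  (heads_perm_tails hl).symm.nodup hnd

lemma walk_first_tail {F : E → Bool × Bool} {a b : V} {q : E × Bool} {t : List (E × Bool)}
    (h : G.IsPWalk F a (q :: t) b) : G.ftail q = a := h.1

/-- In a simple closed walk, two distinct steps which reverse each other force the
walk to consist of exactly those two steps. -/
lemma two_cycle_aux {F : E → Bool × Bool} {a : V} {q r : E × Bool} {l₁ l₂ : List (E × Bool)}
    (hl : G.IsPWalk F a (l₁ ++ q :: l₂) a) (hnd : ((l₁ ++ q :: l₂).map G.ftail).Nodup)
    (hr : r ∈ l₂) (hqr : q ≠ r) (h1 : G.ftail r = G.fhead q) (h2 : G.ftail q = G.fhead r) :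
    ∀ s ∈ l₁ ++ q :: l₂, s = q ∨ s = r := by
  have lnd : (l₁ ++ q :: l₂).Nodup := hnd.of_map
  have tinj := List.inj_on_of_nodup_map hnd
  obtain ⟨c, hA, hB⟩ := hl.split
  obtain ⟨hqc, _, hC⟩ := hB
  obtain ⟨l₃, l₄, rfl⟩ := List.append_of_mem hr
  obtain ⟨d, hD, hE⟩ := hC.split
  obtain ⟨hrd, _, hF⟩ := hE
  -- l₃ = []
  have hl₃ : l₃ = [] := by
    cases l₃ with
    | nil => rfl
    | cons s t =>
      exfalso
      have hsq : G.ftail s = G.fhead q := hD.1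
      have hsr : s = r :=
        tinj (by simp) (by simp) (by rw [hsq, ← h1])
      rw [List.nodup_append] at lnd
      have hx := lnd.2.1
      rw [List.nodup_cons] at hx
      have hy := hx.2
      rw [List.nodup_append] at hy
      exact hy.2.2 _ (show r ∈ s :: t by rw [hsr]; simp) _ (by simp) rfl
  subst hl₃
  simp only [List.nil_append] at hD hrd hF ⊢
  -- now l₂ = r :: l₄, walk from fhead r via l₄ to a, and walk a to c = ftail q via l₁
  have hcomb : G.IsPWalk F (G.ftail q) (l₄ ++ l₁) (G.ftail q) := by
    have hz : G.IsPWalk F (G.fhead r) (l₄ ++ l₁) c := hF.append hA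
    rw [← h2, ← hqc] at hz
    exact hz
  have hnil : l₄ ++ l₁ = [] := by
    cases he : l₄ ++ l₁ with
    | nil => rfl
    | cons s t =>
      exfalso
      rw [he] at hcomb
      have hsq : G.ftail s = G.ftail q := hcomb.1
      have hsl : s ∈ l₁ ++ q :: r :: l₄ := by
        have : s ∈ l₄ ++ l₁ := by rw [he]; simp
        rcases List.mem_append.mp this with h | h
        · simp [h]
        · simp [h]
      have hsq2 : s = q := tinj hsl (by simp) hsq
      subst hsq2
      have : s ∈ l₄ ∨ s ∈ l₁ := by
        have : s ∈ l₄ ++ l₁ := by rw [he]; simp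
        exact List.mem_append.mp this
      rw [List.nodup_append] at lnd
      rcases this with h | h
      · have := lnd.2.1
        rw [List.nodup_cons] at this
        exact this.1 (by simp [h])
      · exact lnd.2.2 _ h _ (by simp) rfl
  rw [List.append_eq_nil_iff] at hnil
  obtain ⟨rfl, rfl⟩ := hnil
  intro s hs
  simpa using hs

lemma two_cycle {F : E → Bool × Bool} {a : V} {q r : E × Bool} {l : List (E × Bool)}
    (hl : G.IsPWalk F a l a) (hnd : (l.map G.ftail).Nodup)
    (hq : q ∈ l) (hr : r ∈ l) (hqr : q ≠ r) (h1 : G.ftail r = G.fhead q)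
    (h2 : G.ftail q = G.fhead r) : ∀ s ∈ l, s = q ∨ s = r := by
  obtain ⟨l₁, l₂, rfl⟩ := List.append_of_mem hq
  have hrr : r ∈ l₁ ∨ r ∈ l₂ := by
    rcases List.mem_append.mp hr with h | h
    · exact Or.inl h
    · rcases List.mem_cons.mp h with h | h
      · exact absurd h.symm hqr
      · exact Or.inr h
  rcases hrr with hrl | hrl
  · obtain ⟨m₁, m₂, rfl⟩ := List.append_of_mem hrl
    have hre : (m₁ ++ r :: m₂) ++ q :: l₂ = m₁ ++ r :: (m₂ ++ q :: l₂) := by simp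
    rw [hre] at hl hnd ⊢
    intro s hs
    exact Or.symm (two_cycle_aux hl hnd (by simp) (Ne.symm hqr) h2 h1 s hs)
  · exact two_cycle_aux hl hnd hrl hqr h1 h2

/-- In a simple closed walk through an oriented step `p`, distinct steps use distinct edges. -/
lemma edge_inj {F : E → Bool × Bool} {a : V} {l : List (E × Bool)} {p : E × Bool}
    (hl : G.IsPWalk F a l a) (hnd : (l.map G.ftail).Nodup)
    (hp : p ∈ l) (hor : (F p.1).1 ≠ (F p.1).2) :
    ∀ q ∈ l, ∀ r ∈ l, q.1 = r.1 → q = r := by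
  intro q hq r hr hqr1
  by_contra hne
  have h2 : q.2 ≠ r.2 := fun h => hne (Prod.ext hqr1 h)
  have hrq : r = (q.1, !q.2) := by
    have : r.2 = !q.2 := by
      cases hq2 : q.2 <;> cases hr2 : r.2 <;> simp_all
    exact Prod.ext hqr1.symm this
  have ht1 : G.ftail r = G.fhead q := by
    rw [hrq]; unfold MGraph.ftail MGraph.fhead; cases hq2 : q.2 <;> simp
  have ht2 : G.ftail q = G.fhead r := by
    rw [hrq]; unfold MGraph.ftail MGraph.fhead; cases hq2 : q.2 <;> simp
  have hall := two_cycle hl hnd hq hr hne ht1 ht2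
  have presq : present F q := hl.present_of_mem hq
  have presr : present F r := hl.present_of_mem hr
  have hbor : (F q.1).1 = true ∧ (F q.1).2 = true := by
    unfold MGraph.present at presq presr
    rw [hrq] at presr
    cases hq2 : q.2 <;> simp [hq2] at presq presr <;> exact ⟨by assumption, by assumption⟩
  rcases hall p hp with rfl | rfl
  · rw [hbor.1, hbor.2] at hor; exact hor rfl
  · rw [hrq] at hor; simp at hor; rw [hbor.1, hbor.2] at hor; exact hor rfl

end MGraph

namespace MGraph

variable {V E : Type} {G : MGraph V E}

/-- If the endpoints of `f ∈ C''` are separated by `C'' \ {f}`, then there is a cut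
meeting `C''` exactly in `f`. -/
lemma exists_cut [Finite V] [Finite E] {C'' : Set E} {f : E} (hf : f ∈ C'')
    (hsep : ¬ G.conn (C'' \ {f}) (G.src f) (G.tgt f)) :
    ∃ Cu : Set E, G.IsCut Cu ∧ Cu ∩ C'' = {f} := by
  classical
  -- take a maximal separating superset S of C'' \ {f}
  set P : Set E → Prop := fun S => C'' \ {f} ⊆ S ∧ ¬ G.conn S (G.src f) (G.tgt f) with hP
  have hfin : {S : Set E | P S}.Finite := Set.toFinite _
  have hne : {S : Set E | P S}.Nonempty := ⟨C'' \ {f}, Set.Subset.rfl, hsep⟩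
  obtain ⟨S, hSP, hSmax⟩ : ∃ S ∈ {S : Set E | P S}, ∀ S' ∈ {S : Set E | P S}, id S ≤ id S' → id S = id S' := by
    obtain ⟨S, hS⟩ := Set.Finite.exists_maximal hfin hne
    exact ⟨S, hS.1, fun S' hS' hle => le_antisymm hle (hS.2 hS' hle)⟩
  simp only [id] at hSmax
  obtain ⟨hSsub, hSsep⟩ := hSP
  set U : Set V := {x | G.conn S x (G.src f)} with hU
  set Cu : Set E := {h | G.crossing U h} with hCu
  have hsrcU : G.src f ∈ U := conn_refl _
  have htgtU : G.tgt f ∉ U := fun h => hSsep (conn_symm h)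
  have noncross : ∀ h ∈ S, ¬ G.crossing U h := by
    intro h hh hcr
    have hc := conn_of_mem (G := G) hh
    have hiff : G.src h ∈ U ↔ G.tgt h ∈ U :=
      ⟨fun hs => conn_trans (conn_symm hc) hs, fun ht => conn_trans hc ht⟩
    unfold MGraph.crossing at hcr
    tauto
  have hfCu : f ∈ Cu := by
    show G.crossing U f
    unfold MGraph.crossing
    tauto
  have hCuC : Cu ∩ C'' = {f} := by
    ext h
    constructor
    · rintro ⟨hhCu, hhC⟩
      by_contra hne'
      exact noncross h (hSsub ⟨hhC, hne'⟩) hhCu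
    · rintro rfl
      exact ⟨hfCu, hf⟩
  -- decomposition property for crossing edges
  have hdec : ∀ h ∈ Cu,
      (G.conn S (G.src f) (G.src h) ∧ G.conn S (G.tgt h) (G.tgt f)) ∨
      (G.conn S (G.src f) (G.tgt h) ∧ G.conn S (G.src h) (G.tgt f)) := by
    intro h hh
    by_cases hhf : h = f
    · subst hhf; exact Or.inl ⟨conn_refl _, conn_refl _⟩
    · have hhS : h ∉ S := fun hmem => noncross h hmem hh
      have hins : G.conn (insert h S) (G.src f) (G.tgt f) := by
        by_contra hcon
        have : P (insert h S) := ⟨hSsub.trans (Set.subset_insert _ _), hcon⟩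
        have := hSmax _ this (Set.subset_insert _ _)
        exact hhS (this ▸ Set.mem_insert h S)
      rcases conn_insert_decomp hins with hc | ⟨hc1, hc2⟩ | ⟨hc1, hc2⟩
      · exact absurd hc hSsep
      · exact Or.inl ⟨hc1, hc2⟩
      · exact Or.inr ⟨hc1, hc2⟩
  have hCuc_noncross : ∀ h ∈ Cuᶜ, (G.src h ∈ U ↔ G.tgt h ∈ U) := by
    intro h hh
    have : ¬ G.crossing U h := hh
    unfold MGraph.crossing at this
    tauto
  refine ⟨Cu, ⟨⟨f, hfCu⟩, ?_, ?_⟩, hCuC⟩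
  · -- kappa Cuᶜ > kappa univ
    refine kappa_lt (Set.subset_univ _) ?_ (conn_of_mem (Set.mem_univ f))
    exact not_conn_of_noncrossing hCuc_noncross hsrcU htgtU
  · -- minimality
    intro Cu'' hss hne'' hgt
    obtain ⟨hsub'', hnsub⟩ := hss
    obtain ⟨h0, hh0Cu, hh0n⟩ : ∃ h0 ∈ Cu, h0 ∉ Cu'' := by
      by_contra hcon
      push_neg at hcon
      exact hnsub hcon
    have hSCu : S ⊆ Cuᶜ := fun h hh hmem => noncross h hh hmem
    have hSCu'' : S ⊆ Cu''ᶜ := hSCu.trans (Set.compl_subset_compl.mpr hsub'')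
    have hstep0 : G.conn Cu''ᶜ (G.src h0) (G.tgt h0) := conn_of_mem hh0n
    -- src f ∼ tgt f in Cu''ᶜ
    have hkey : G.conn Cu''ᶜ (G.src f) (G.tgt f) := by
      rcases hdec h0 hh0Cu with ⟨hc1, hc2⟩ | ⟨hc1, hc2⟩
      · exact conn_trans (conn_mono hSCu'' hc1)
          (conn_trans hstep0 (conn_mono hSCu'' hc2))
      · exact conn_trans (conn_mono hSCu'' hc1)
          (conn_trans (conn_symm hstep0) (conn_mono hSCu'' hc2))
    have hall : ∀ h : E, h ∈ (Set.univ : Set E) → G.conn Cu''ᶜ (G.src h) (G.tgt h) := by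
      intro h _
      by_cases hh : h ∈ Cu
      · rcases hdec h hh with ⟨hc1, hc2⟩ | ⟨hc1, hc2⟩
        · exact conn_trans (conn_symm (conn_mono hSCu'' hc1))
            (conn_trans hkey (conn_symm (conn_mono hSCu'' hc2)))
        · exact conn_trans (conn_mono hSCu'' hc2)
            (conn_trans (conn_symm hkey) (conn_mono hSCu'' hc1))
      · exact conn_of_mem (fun hmem => hh (hsub'' hmem))
    have := kappa_eq_of_conn (Set.subset_univ (Cu''ᶜ)) hall
    omega

end MGraph

namespace MGraph

variable {V E : Type} {G : MGraph V E}

lemma endpoints_cases (G : MGraph V E) (e : E) (d : Bool) :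
    (G.src e = G.ftail (e, d) ∧ G.tgt e = G.fhead (e, d)) ∨
    (G.src e = G.fhead (e, d) ∧ G.tgt e = G.ftail (e, d)) := by
  unfold MGraph.ftail MGraph.fhead
  cases d <;> simp

section SimpleClosed

variable {F : E → Bool × Bool} {a : V} {l : List (E × Bool)} {dir : E → Bool}

/-- Arc connectivity: in a simple closed walk, removing an edge leaves its endpoints
connected through the remaining edges. -/
lemma arc_conn (hl : G.IsPWalk F a l a) (hnd : (l.map G.ftail).Nodup)
    (hdir : ∀ s ∈ l, s = (s.1, dir s.1)) {f : E} (hf : (f, dir f) ∈ l) :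
    G.conn ({x | ∃ d, (x, d) ∈ l} \ {f}) (G.src f) (G.tgt f) := by
  have lnd : l.Nodup := hnd.of_map
  set s : E × Bool := (f, dir f) with hs
  obtain ⟨l₁, l₂, rfl⟩ := List.append_of_mem hf
  rw [List.nodup_append] at lnd
  have hsl₁ : s ∉ l₁ := fun h => lnd.2.2 _ h _ (by simp) rfl
  have hsl₂ : s ∉ l₂ := ((List.nodup_cons.mp lnd.2.1)).1
  obtain ⟨c, hA, hB⟩ := hl.split
  obtain ⟨hsc, _, hC⟩ := hB
  have hm : G.IsPWalk F (G.fhead s) (l₂ ++ l₁) (G.ftail s) := by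
    have := hC.append hA
    rwa [← hsc] at this
  have hconn : G.conn ({x | ∃ d, (x, d) ∈ l₁ ++ s :: l₂} \ {f}) (G.fhead s) (G.ftail s) := by
    refine hm.conn_of_edges ?_
    intro q hq
    have hql : q ∈ l₁ ++ s :: l₂ := by
      rcases List.mem_append.mp hq with h | h
      · simp [h]
      · simp [h]
    refine ⟨⟨q.2, by simpa using hql⟩, ?_⟩
    intro hq1
    have : q = s := by
      rw [hdir q hql]
      simp only [Set.mem_singleton_iff] at hq1
      rw [hq1]
    subst this
    rcases List.mem_append.mp hq with h | h
    · exact hsl₂ h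
    · exact hsl₁ h
  rw [hs] at hconn
  rcases endpoints_cases G f (dir f) with ⟨h1, h2⟩ | ⟨h1, h2⟩
  · rw [h1, h2]; exact conn_symm hconn
  · rw [h1, h2]; exact hconn

/-- Separation: for `f ≠ g` on a simple closed walk, there is a vertex set `A`
crossed by `f` but by no other walk edge except possibly `g`. -/
lemma cycle_sep (hl : G.IsPWalk F a l a) (hnd : (l.map G.ftail).Nodup)
    (hdir : ∀ s ∈ l, s = (s.1, dir s.1)) {f g : E}
    (hf : (f, dir f) ∈ l) (hg : (g, dir g) ∈ l) (hfg : f ≠ g) :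
    ∃ A : Set V, ((G.src f ∈ A ∧ G.tgt f ∉ A) ∨ (G.tgt f ∈ A ∧ G.src f ∉ A)) ∧
      ∀ h, (∃ d, (h, d) ∈ l) → h ≠ f → h ≠ g → (G.src h ∈ A ↔ G.tgt h ∈ A) := by
  have lnd : l.Nodup := hnd.of_map
  have tinj := List.inj_on_of_nodup_map hnd
  have hinj := List.inj_on_of_nodup_map (heads_nodup hl hnd)
  set s : E × Bool := (f, dir f) with hs
  set t : E × Bool := (g, dir g) with ht
  have hst : s ≠ t := fun h => hfg (congrArg Prod.fst h)
  obtain ⟨l₁, l₂, hldec⟩ := List.append_of_mem hf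
  rw [hldec] at lnd
  rw [List.nodup_append] at lnd
  have hsl₁ : s ∉ l₁ := fun h => lnd.2.2 _ h _ (by simp) rfl
  have hsl₂ : s ∉ l₂ := ((List.nodup_cons.mp lnd.2.1)).1
  have hmnd : (l₂ ++ l₁).Nodup := by
    refine List.Nodup.append ((List.nodup_cons.mp lnd.2.1)).2 lnd.1 ?_
    intro x hx₂ hx₁
    exact lnd.2.2 _ hx₁ _ (List.mem_cons_of_mem _ hx₂) rfl
  have hmsub : ∀ q ∈ l₂ ++ l₁, q ∈ l := by
    intro q hq
    rw [hldec]
    rcases List.mem_append.mp hq with h | h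
    · simp [h]
    · simp [h]
  have hsm : s ∉ l₂ ++ l₁ := by
    intro h
    rcases List.mem_append.mp h with h | h
    · exact hsl₂ h
    · exact hsl₁ h
  obtain ⟨c, hA, hB⟩ : ∃ c, G.IsPWalk F a l₁ c ∧ G.IsPWalk F c (s :: l₂) a := by
    rw [hldec] at hl; exact hl.split
  obtain ⟨hsc, _, hC⟩ := hB
  have hm : G.IsPWalk F (G.fhead s) (l₂ ++ l₁) (G.ftail s) := by
    have := hC.append hA
    rwa [← hsc] at this
  have htm : t ∈ l₂ ++ l₁ := by
    have := hg
    rw [hldec] at this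
    rcases List.mem_append.mp this with h | h
    · exact List.mem_append.mpr (Or.inr h)
    · rcases List.mem_cons.mp h with h | h
      · exact absurd h.symm hst
      · exact List.mem_append.mpr (Or.inl h)
  obtain ⟨m₁, m₂, hmdec⟩ := List.append_of_mem htm
  rw [hmdec] at hm hmnd hsm hmsub
  rw [List.nodup_append] at hmnd
  obtain ⟨d, hD, hE⟩ := hm.split
  have htd : G.ftail t = d := hE.1
  set A : Set V := {x | x ∈ (m₁ ++ [t]).map G.ftail} with hA'
  have desc2 : (m₁ ++ [t]).map G.ftail = G.fhead s :: m₁.map G.fhead := by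
    rw [List.map_append]
    simp only [List.map_cons, List.map_nil]
    rw [htd]
    exact hD.tails_concat
  have hm₁l : ∀ q ∈ m₁ ++ [t], q ∈ l := by
    intro q hq
    rcases List.mem_append.mp hq with h | h
    · exact hmsub q (by simp [h])
    · rw [List.mem_singleton.mp h]; exact hg
  have hheadA : G.fhead s ∈ A := by
    show G.fhead s ∈ (m₁ ++ [t]).map G.ftail
    rw [desc2]; simp
  have htailA : G.ftail s ∉ A := by
    intro hmem
    obtain ⟨u, hu, hueq⟩ := List.mem_map.mp hmem
    have : u = s := tinj (hm₁l u hu) hf hueq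
    subst this
    rcases List.mem_append.mp hu with h | h
    · exact hsm (by simp [h])
    · exact hst (List.mem_singleton.mp h)
  have noncross : ∀ h, (∃ d, (h, d) ∈ l) → h ≠ f → h ≠ g → (G.src h ∈ A ↔ G.tgt h ∈ A) := by
    intro h hhC hhf hhg
    obtain ⟨dh, hdh⟩ := hhC
    have hu : (h, dir h) ∈ l := by rw [← hdir _ hdh]; exact hdh
    set u : E × Bool := (h, dir h) with hu'
    have hus : u ≠ s := fun hh => hhf (congrArg Prod.fst hh)
    have hut : u ≠ t := fun hh => hhg (congrArg Prod.fst hh)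
    have hum : u ∈ m₁ ++ t :: m₂ := by
      have := hu
      rw [hldec] at this
      rcases List.mem_append.mp this with hh | hh
      · rw [← hmdec]; exact List.mem_append.mpr (Or.inr hh)
      · rcases List.mem_cons.mp hh with hh | hh
        · exact absurd hh hus
        · rw [← hmdec]; exact List.mem_append.mpr (Or.inl hh)
    have humm : u ∈ m₁ ∨ u ∈ m₂ := by
      rcases List.mem_append.mp hum with hh | hh
      · exact Or.inl hh
      · rcases List.mem_cons.mp hh with hh | hh
        · exact absurd hh hut
        · exact Or.inr hh
    have hkey : (G.ftail u ∈ A ∧ G.fhead u ∈ A) ∨ (G.ftail u ∉ A ∧ G.fhead u ∉ A) := by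
      rcases humm with hh | hh
      · refine Or.inl ⟨?_, ?_⟩
        · show G.ftail u ∈ (m₁ ++ [t]).map G.ftail
          exact List.mem_map_of_mem (by simp [hh])
        · show G.fhead u ∈ (m₁ ++ [t]).map G.ftail
          rw [desc2]
          exact List.mem_cons_of_mem _ (List.mem_map_of_mem hh)
      · refine Or.inr ⟨?_, ?_⟩
        · intro hmem
          obtain ⟨w, hw, hweq⟩ := List.mem_map.mp hmem
          have : w = u := tinj (hm₁l w hw) hu hweq
          subst this
          rcases List.mem_append.mp hw with hw' | hw'
          · exact hmnd.2.2 _ hw' _ (List.mem_cons_of_mem _ hh) rfl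
          · exact hut (List.mem_singleton.mp hw')
        · intro hmem
          have hmem' : G.fhead u ∈ (m₁ ++ [t]).map G.ftail := hmem
          rw [desc2] at hmem'
          rcases List.mem_cons.mp hmem' with hh' | hh'
          · exact hus (hinj hu hf hh')
          · obtain ⟨w, hw, hweq⟩ := List.mem_map.mp hh'
            have : u = w := hinj hu (hm₁l w (by simp [hw])) hweq.symm
            subst this
            exact hmnd.2.2 _ hw _ (List.mem_cons_of_mem _ hh) rfl
    rw [hu'] at hkey
    rcases endpoints_cases G h (dir h) with ⟨h1, h2⟩ | ⟨h1, h2⟩ <;>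
      rw [h1, h2] <;>
      rcases hkey with ⟨k1, k2⟩ | ⟨k1, k2⟩ <;> simp [k1, k2]
  refine ⟨A, ?_, noncross⟩
  rw [hs] at hheadA htailA
  rcases endpoints_cases G f (dir f) with ⟨h1, h2⟩ | ⟨h1, h2⟩
  · exact Or.inr ⟨by rw [h2]; exact hheadA, by rw [h1]; exact htailA⟩
  · exact Or.inl ⟨by rw [h1]; exact hheadA, by rw [h2]; exact htailA⟩

end SimpleClosed

end MGraph

namespace MGraph

variable {V E : Type} {G : MGraph V E}

lemma ohead_eq_fhead (G : MGraph V E) (dir : E → Bool) (h : E) :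
    G.ohead dir h = G.fhead (h, dir h) := rfl

lemma otail_eq_ftail (G : MGraph V E) (dir : E → Bool) (h : E) :
    G.otail dir h = G.ftail (h, dir h) := rfl

lemma cycle_degree {F : E → Bool × Bool} {a : V} {l : List (E × Bool)} {dir : E → Bool}
    (hl : G.IsPWalk F a l a) (hnd : (l.map G.ftail).Nodup)
    (hdir : ∀ s ∈ l, s = (s.1, dir s.1)) (x : V) :
    {h ∈ {y | ∃ d, (y, d) ∈ l} | G.ohead dir h = x}.ncard =
      {h ∈ {y | ∃ d, (y, d) ∈ l} | G.otail dir h = x}.ncard := by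
  have tinj := List.inj_on_of_nodup_map hnd
  have hinj := List.inj_on_of_nodup_map (heads_nodup hl hnd)
  by_cases hx : x ∈ l.map G.fhead
  · obtain ⟨s, hsl, hsx⟩ := List.mem_map.mp hx
    have hx' : x ∈ l.map G.ftail := ((heads_perm_tails hl).mem_iff).mp hx
    obtain ⟨t, htl, htx⟩ := List.mem_map.mp hx'
    have e1 : {h ∈ {y | ∃ d, (y, d) ∈ l} | G.ohead dir h = x} = {s.1} := by
      ext h
      simp only [Set.mem_setOf_eq, Set.mem_singleton_iff]
      constructor
      · rintro ⟨⟨d0, hd0⟩, hh⟩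
        have hul : (h, dir h) ∈ l := by rw [← hdir _ hd0]; exact hd0
        have : (h, dir h) = s := hinj hul hsl (by rw [← ohead_eq_fhead, hh, hsx])
        exact congrArg Prod.fst this
      · rintro rfl
        refine ⟨⟨s.2, by simpa using hsl⟩, ?_⟩
        rw [ohead_eq_fhead, ← hdir s hsl, hsx]
    have e2 : {h ∈ {y | ∃ d, (y, d) ∈ l} | G.otail dir h = x} = {t.1} := by
      ext h
      simp only [Set.mem_setOf_eq, Set.mem_singleton_iff]
      constructor
      · rintro ⟨⟨d0, hd0⟩, hh⟩
        have hul : (h, dir h) ∈ l := by rw [← hdir _ hd0]; exact hd0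
        have : (h, dir h) = t := tinj hul htl (by rw [← otail_eq_ftail, hh, htx])
        exact congrArg Prod.fst this
      · rintro rfl
        refine ⟨⟨t.2, by simpa using htl⟩, ?_⟩
        rw [otail_eq_ftail, ← hdir t htl, htx]
    rw [e1, e2, Set.ncard_singleton, Set.ncard_singleton]
  · have hx' : x ∉ l.map G.ftail := fun h => hx (((heads_perm_tails hl).mem_iff).mpr h)
    have e1 : {h ∈ {y | ∃ d, (y, d) ∈ l} | G.ohead dir h = x} = ∅ := by
      ext h
      simp only [Set.mem_setOf_eq, Set.mem_empty_iff_false, iff_false, not_and]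
      rintro ⟨d0, hd0⟩ hh
      have hul : (h, dir h) ∈ l := by rw [← hdir _ hd0]; exact hd0
      exact hx (hh ▸ (ohead_eq_fhead G dir h) ▸ List.mem_map_of_mem (f := G.fhead) hul)
    have e2 : {h ∈ {y | ∃ d, (y, d) ∈ l} | G.otail dir h = x} = ∅ := by
      ext h
      simp only [Set.mem_setOf_eq, Set.mem_empty_iff_false, iff_false, not_and]
      rintro ⟨d0, hd0⟩ hh
      have hul : (h, dir h) ∈ l := by rw [← hdir _ hd0]; exact hd0
      exact hx' (hh ▸ (otail_eq_ftail G dir h) ▸ List.mem_map_of_mem (f := G.ftail) hul)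
    rw [e1, e2]

end MGraph
/-- if `P₁` is a potential path of a fourientation `O` from `v`
to `u` and `P₂` a potential path from `u` to `v` (`u ≠ v`), then every oriented
edge appearing in the closed walk `P₁P₂` lies on a potential cycle `Cy ⊆ P₁P₂`
of `O`; moreover every bioriented edge of `Cy` is traversed by `Cy` in a
direction consistent with `P₁` or `P₂`. -/
theorem potential_path_lemma {V E : Type} [Fintype V] [Fintype E]
    (G : MGraph V E) (F : E → Bool × Bool) (u v : V) (huv : u ≠ v)
    (P₁ P₂ : List (E × Bool))
    (h1 : G.IsPPath F v P₁ u) (h2 : G.IsPPath F u P₂ v)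
    (e : E) (he : (F e).1 ≠ (F e).2) (happ : ∃ d : Bool, (e, d) ∈ P₁ ++ P₂) :
    ∃ (C : Set E) (dir : E → Bool), G.PotCycle F C dir ∧ e ∈ C ∧
      (∀ f ∈ C, ∃ d : Bool, (f, d) ∈ P₁ ++ P₂) ∧
      (∀ f ∈ C, F f = (true, true) → (f, dir f) ∈ P₁ ++ P₂) := by
  classical
  obtain ⟨d₀, hd₀⟩ := happ
  have hwalk : G.IsPWalk F v (P₁ ++ P₂) v := h1.1.append h2.1
  obtain ⟨W₁, W₂, hWdec⟩ := List.append_of_mem hd₀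
  rw [hWdec] at hwalk
  obtain ⟨c, hc1, hc2⟩ := hwalk.split
  obtain ⟨hpc, hpres, hc3⟩ := hc2
  have hrot : G.IsPWalk F (G.fhead (e, d₀)) (W₂ ++ W₁) (G.ftail (e, d₀)) := by
    have h' := hc3.append hc1
    rwa [hpc]
  obtain ⟨w', hl, hnd, hsub⟩ := MGraph.exists_simple_closed hrot hpres
  set l : List (E × Bool) := (e, d₀) :: w' with hldef
  have hsubl : ∀ q ∈ l, q ∈ P₁ ++ P₂ := by
    intro q hq
    rcases List.mem_cons.mp hq with rfl | hq
    · exact hd₀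
    · have hq' := hsub q hq
      rw [hWdec]
      rcases List.mem_append.mp hq' with h | h
      · simp [h]
      · simp [h]
  have hpl : (e, d₀) ∈ l := List.mem_cons_self
  have heinj := MGraph.edge_inj hl hnd hpl he
  set dir : E → Bool := fun x => if hx : ∃ d, (x, d) ∈ l then hx.choose else true with hdirdef
  have hdirl : ∀ s ∈ l, s = (s.1, dir s.1) := by
    intro s hs
    have hex : ∃ d, (s.1, d) ∈ l := ⟨s.2, by simpa using hs⟩
    have hdval : dir s.1 = hex.choose := by rw [hdirdef]; exact dif_pos hex
    have hmem : (s.1, dir s.1) ∈ l := by rw [hdval]; exact hex.choose_spec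
    exact heinj s hs _ hmem rfl
  set C : Set E := {x | ∃ d, (x, d) ∈ l} with hCdef
  have hCsub : ∀ f ∈ C, (f, dir f) ∈ l := by
    intro f hf
    obtain ⟨d, hd⟩ := hf
    rw [hdirl _ hd] at hd
    exact hd
  have heC : e ∈ C := ⟨d₀, hpl⟩
  refine ⟨C, dir, ⟨⟨⟨e, heC⟩, ?_, ?_⟩, ?_, ?_⟩, heC, ?_, ?_⟩
  · -- no cut meets C in exactly one element
    intro Cu hCu hone
    obtain ⟨f, hfeq⟩ := Set.ncard_eq_one.mp hone
    have hfmem : f ∈ Cu ∩ C := hfeq ▸ Set.mem_singleton f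
    have hfC : f ∈ C := hfmem.2
    have hfCu : f ∈ Cu := hfmem.1
    have harc := MGraph.arc_conn hl hnd hdirl (hCsub f hfC)
    have hsub2 : C \ {f} ⊆ Cuᶜ := by
      rintro x ⟨hxC, hxf⟩ hxCu
      exact hxf (hfeq ▸ (⟨hxCu, hxC⟩ : x ∈ Cu ∩ C))
    have harc2 : G.conn Cuᶜ (G.src f) (G.tgt f) := MGraph.conn_mono hsub2 harc
    obtain ⟨hCune, hgt, hmin⟩ := hCu
    by_cases hsing : Cu \ {f} = ∅
    · have hall : ∀ h : E, h ∈ (Set.univ : Set E) → G.conn Cuᶜ (G.src h) (G.tgt h) := by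
        intro h _
        by_cases hhf : h = f
        · exact hhf ▸ harc2
        · refine MGraph.conn_of_mem ?_
          intro hhCu
          exact hhf (by_contra fun hne => (Set.eq_empty_iff_forall_notMem.mp hsing h) ⟨hhCu, hne⟩)
      have := MGraph.kappa_eq_of_conn (Set.subset_univ _) hall
      omega
    · have hne2 : (Cu \ {f}).Nonempty := Set.nonempty_iff_ne_empty.mpr hsing
      have hss : Cu \ {f} ⊂ Cu :=
        ⟨Set.diff_subset, fun hsup => (hsup hfCu).2 rfl⟩
      have hmin' := hmin _ hss hne2
      have hle := MGraph.kappa_le (G := G) (Set.subset_univ ((Cu \ {f})ᶜ))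
      have heq2 : G.kappa Cuᶜ = G.kappa ((Cu \ {f})ᶜ) := by
        refine MGraph.kappa_eq_of_conn (Set.compl_subset_compl.mpr Set.diff_subset) ?_
        intro h hh
        by_cases hhf : h = f
        · exact hhf ▸ harc2
        · refine MGraph.conn_of_mem ?_
          intro hhCu
          exact hh ⟨hhCu, hhf⟩
      omega
  · -- minimality of the cycle
    intro C'' hss hne'' hforall
    obtain ⟨f, hfC''⟩ := hne''
    obtain ⟨g, hgC, hgC''⟩ := Set.exists_of_ssubset hss
    have hfC : f ∈ C := hss.1 hfC''
    have hfg : f ≠ g := fun h => hgC'' (h ▸ hfC'')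
    obtain ⟨A, hcross, hnoncross⟩ :=
      MGraph.cycle_sep hl hnd hdirl (hCsub f hfC) (hCsub g hgC) hfg
    have hsep : ¬ G.conn (C'' \ {f}) (G.src f) (G.tgt f) := by
      have hnc : ∀ h ∈ C'' \ {f}, (G.src h ∈ A ↔ G.tgt h ∈ A) := by
        rintro h ⟨hh, hhf⟩
        exact hnoncross h (hss.1 hh) hhf (fun hgg => hgC'' (hgg ▸ hh))
      rcases hcross with ⟨ha1, ha2⟩ | ⟨ha1, ha2⟩
      · exact MGraph.not_conn_of_noncrossing hnc ha1 ha2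
      · intro hcon
        exact (MGraph.not_conn_of_noncrossing hnc ha1 ha2) (MGraph.conn_symm hcon)
    obtain ⟨Cu, hCu, hCuC⟩ := MGraph.exists_cut hfC'' hsep
    exact hforall Cu hCu (by rw [hCuC]; exact Set.ncard_singleton f)
  · -- degree condition
    exact MGraph.cycle_degree hl hnd hdirl
  · -- presence
    intro f hf
    exact hl.present_of_mem (hCsub f hf)
  · -- edges come from P₁ ++ P₂
    exact fun f hf => ⟨dir f, hsubl _ (hCsub f hf)⟩
  · -- bioriented edges traversed consistently
    exact fun f hf _ => hsubl _ (hCsub f hf)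
end

section
/- Let G be a graph with total edge order and reference orientation, and suppose the maximum edge e of G is a loop. Then for any fourientation O of G: I^o(O) = I^o(O/e) and I^u(O) = I^u(O/e); if e is oriented in O then L^o(O) = {e} ∪ L^o(O−e) and L^b(O) = L^b(O−e); if e is bioriented in O then L^o(O) = L^o(O−e) and L^b(O) = {e} ∪ L^b(O−e). -/
open scoped Classical

/-- A multigraph with a fixed reference orientation: each edge `e` has a
source `src e` and a target `tgt e` (the positive direction `e⁺ = (src e, tgt e)`). -/
structure RefGraph (V E : Type) where
  src : E → V
  tgt : E → V

namespace RefGraph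

variable {V E : Type} (G : RefGraph V E)

/-- Two vertices are joined by some edge of `S`. -/
def step (S : Set E) (a b : V) : Prop :=
  ∃ e ∈ S, (G.src e = a ∧ G.tgt e = b) ∨ (G.src e = b ∧ G.tgt e = a)

/-- `κ(S)`: the number of connected components of the spanning subgraph `(V, S)`. -/
noncomputable def kappa (S : Set E) : ℕ :=
  Nat.card (Quot (G.step S))

/-- A cut of `G`: a minimal nonempty edge set whose removal increases the
number of connected components. -/
def IsCut (C : Set E) : Prop :=
  C.Nonempty ∧ G.kappa Cᶜ > G.kappa Set.univ ∧
    ∀ C' : Set E, C' ⊂ C → C'.Nonempty → ¬ (G.kappa C'ᶜ > G.kappa Set.univ)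

/-- A cycle of `G`: a minimal nonempty edge set meeting no cut of `G` in
precisely one element. -/
def IsCycle (C : Set E) : Prop :=
  C.Nonempty ∧ (∀ Cu : Set E, G.IsCut Cu → (Cu ∩ C).ncard ≠ 1) ∧
    ∀ C' : Set E, C' ⊂ C → C'.Nonempty →
      ¬ (∀ Cu : Set E, G.IsCut Cu → (Cu ∩ C').ncard ≠ 1)

/-- Head of edge `e` under orientation `O` (`O e = true` means the reference
direction `src e → tgt e`). -/
def ohead (O : E → Bool) (e : E) : V := if O e then G.tgt e else G.src e

/-- Tail of edge `e` under orientation `O`. -/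
def otail (O : E → Bool) (e : E) : V := if O e then G.src e else G.tgt e

/-- Edge `e` crosses the vertex set `U` (exactly one endpoint in `U`). -/
def crossing (U : Set V) (e : E) : Prop := G.src e ∈ U ↔ G.tgt e ∉ U

/-- A directed cut of the orientation `O`: a cut all of whose edges are
oriented consistently out of some vertex set `U`. -/
def IsDirCut (O : E → Bool) (C : Set E) : Prop :=
  G.IsCut C ∧ ∃ U : Set V, (∀ e, e ∈ C ↔ G.crossing U e) ∧ ∀ e ∈ C, G.otail O e ∈ U

/-- A directed cycle of the orientation `O`: a cycle oriented consistently,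
i.e. in-degree equals out-degree at each vertex within the cycle. -/
def IsDirCycle (O : E → Bool) (C : Set E) : Prop :=
  G.IsCycle C ∧ ∀ v : V,
    {e ∈ C | G.ohead O e = v}.ncard = {e ∈ C | G.otail O e = v}.ncard

section Activities

variable [LinearOrder E]

/-- `Î(S)`: cut active edges of the spanning subgraph `S`. -/
def Iact (S : Set E) : Set E :=
  {e | ∃ C : Set E, G.IsCut C ∧ e ∈ C ∧ (∀ f ∈ C, f ≠ e → f ∉ S) ∧ ∀ f ∈ C, e ≤ f}

/-- `L̂(S)`: cycle active edges of the spanning subgraph `S`. -/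
def Lact (S : Set E) : Set E :=
  {e | ∃ C : Set E, G.IsCycle C ∧ e ∈ C ∧ (∀ f ∈ C, f = e ∨ f ∈ S) ∧ ∀ f ∈ C, e ≤ f}

/-- `I(O)`: cut active edges of the orientation `O`. -/
def Ior (O : E → Bool) : Set E :=
  {e | ∃ C : Set E, G.IsDirCut O C ∧ e ∈ C ∧ ∀ f ∈ C, e ≤ f}

/-- `L(O)`: cycle active edges of the orientation `O`. -/
def Lor (O : E → Bool) : Set E :=
  {e | ∃ C : Set E, G.IsDirCycle O C ∧ e ∈ C ∧ ∀ f ∈ C, e ≤ f}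

end Activities

/-- The Tutte polynomial via the corank-nullity expansion, evaluated in a
commutative ring. -/
noncomputable def tutte [Fintype V] [Fintype E] (R : Type) [CommRing R] (x y : R) : R :=
  ∑ S : Finset E, (x - 1) ^ (G.kappa ↑S - G.kappa Set.univ) *
    (y - 1) ^ (S.card + G.kappa ↑S - Fintype.card V)

/-! ### Fourientations.
A fourientation is `F : E → Bool × Bool`, recording whether `e⁺` resp. `e⁻`
belongs to the fourientation. -/

/-- A potential cut of the fourientation `F`: a directed cut each of whose
edges is unoriented in `F` or oriented in the cut direction (out of `U`). -/
def PotCut (F : E → Bool × Bool) (C : Set E) : Prop :=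
  G.IsCut C ∧ ∃ U : Set V, (∀ e, e ∈ C ↔ G.crossing U e) ∧
    ∀ e ∈ C, (G.src e ∈ U → (F e).2 = false) ∧ (G.src e ∉ U → (F e).1 = false)

/-- A potential cycle of the fourientation `F`, with cyclic direction `dir`:
a consistently directed cycle each of whose edges has its `dir`-direction
present in `F` (so each edge is bioriented or oriented in the cycle direction). -/
def PotCycle (F : E → Bool × Bool) (C : Set E) (dir : E → Bool) : Prop :=
  G.IsCycle C ∧
    (∀ v : V, {e ∈ C | G.ohead dir e = v}.ncard = {e ∈ C | G.otail dir e = v}.ncard) ∧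
    ∀ e ∈ C, (if dir e then (F e).1 else (F e).2) = true

/-- Add the direction `d` of edge `e` to the fourientation `F`. -/
def addDir [DecidableEq E] (F : E → Bool × Bool) (e : E) (d : Bool) : E → Bool × Bool :=
  Function.update F e (if d then (true, (F e).2) else ((F e).1, true))

/-- Remove the direction `d` of edge `e` from the fourientation `F`. -/
def remDir [DecidableEq E] (F : E → Bool × Bool) (e : E) (d : Bool) : E → Bool × Bool :=
  Function.update F e (if d then (false, (F e).2) else ((F e).1, false))

/-- `ᵉO`: toggle the status of the edge `e` in the fourientation `F`. -/
def toggle [DecidableEq E] (F : E → Bool × Bool) (e : E) : E → Bool × Bool :=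
  Function.update F e ((F e).2, (F e).1)

section FourActivities

variable [LinearOrder E]

/-- `I^o(O)`: oriented edges that are minimal in some potential cut. -/
def Io (F : E → Bool × Bool) : Set E :=
  {f | (F f).1 ≠ (F f).2 ∧ ∃ C : Set E, G.PotCut F C ∧ f ∈ C ∧ ∀ g ∈ C, f ≤ g}

/-- `L^o(O)`: oriented edges that are minimal in some potential cycle. -/
def Lo (F : E → Bool × Bool) : Set E :=
  {f | (F f).1 ≠ (F f).2 ∧
    ∃ (C : Set E) (dir : E → Bool), G.PotCycle F C dir ∧ f ∈ C ∧ ∀ g ∈ C, f ≤ g}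

/-- `I^u(O)`: unoriented edges `f` minimal in some potential cut of
`O ∪ {f^{σᵤ(f)}}`. -/
def Iu (σu : E → Bool) (F : E → Bool × Bool) : Set E :=
  {f | F f = (false, false) ∧
    ∃ C : Set E, G.PotCut (addDir F f (σu f)) C ∧ f ∈ C ∧ ∀ g ∈ C, f ≤ g}

/-- `L^b(O)`: bioriented edges `f` minimal in some potential cycle of
`O \ {f^{σ_b(f)}}`. -/
def Lb (σb : E → Bool) (F : E → Bool × Bool) : Set E :=
  {f | F f = (true, true) ∧
    ∃ (C : Set E) (dir : E → Bool),
      G.PotCycle (remDir F f (σb f)) C dir ∧ f ∈ C ∧ ∀ g ∈ C, f ≤ g}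

end FourActivities

/-- The deletion `G − e`. -/
def del (e : E) : RefGraph V {f : E // f ≠ e} :=
  ⟨fun f => G.src f.1, fun f => G.tgt f.1⟩

/-- The contraction `G/e`: identify the endpoints of `e` and remove `e`. -/
def contr (e : E) : RefGraph (Quot (fun a b => a = G.src e ∧ b = G.tgt e)) {f : E // f ≠ e} :=
  ⟨fun f => Quot.mk _ (G.src f.1), fun f => Quot.mk _ (G.tgt f.1)⟩

/-! ### Potential walks in a fourientation. A walk step is a pair `(e, d)` of an
edge and a chosen direction (`d = true` for the reference direction). -/

/-- Tail of the directed edge `(e, d)`. -/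
def ftail (p : E × Bool) : V := if p.2 then G.src p.1 else G.tgt p.1

/-- Head of the directed edge `(e, d)`. -/
def fhead (p : E × Bool) : V := if p.2 then G.tgt p.1 else G.src p.1

/-- The direction `d` of `e` is present in the fourientation `F`. -/
def present (F : E → Bool × Bool) (p : E × Bool) : Prop :=
  (if p.2 then (F p.1).1 else (F p.1).2) = true

/-- A potential walk of the fourientation `F` from `a` to `b`: each step uses
a direction present in `F` (so each edge is bioriented or oriented
consistently with the walk). -/
def IsPWalk (F : E → Bool × Bool) : V → List (E × Bool) → V → Prop
  | a, [], b => a = b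
  | a, p :: rest, b => G.ftail p = a ∧ present F p ∧ IsPWalk F (G.fhead p) rest b

/-- A potential path: a potential walk visiting pairwise distinct vertices. -/
def IsPPath (F : E → Bool × Bool) (a : V) (w : List (E × Bool)) (b : V) : Prop :=
  G.IsPWalk F a w b ∧ (a :: w.map G.fhead).Nodup

end RefGraph

namespace RefGraph

private def quotEquivAux {α β : Type} (r : α → α → Prop) (s : β → β → Prop) (f : α ≃ β)
    (h1 : ∀ a b, r a b → Quot.mk s (f a) = Quot.mk s (f b))
    (h2 : ∀ a b, s a b → Quot.mk r (f.symm a) = Quot.mk r (f.symm b)) :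
    Quot r ≃ Quot s where
  toFun := Quot.lift (fun a => Quot.mk s (f a)) h1
  invFun := Quot.lift (fun b => Quot.mk r (f.symm b)) h2
  left_inv q := Quot.inductionOn q fun a => by simp
  right_inv q := Quot.inductionOn q fun b => by simp

section Loop

variable {V E : Type} (G : RefGraph V E) (e : E)

lemma kappa_diff (hloop : G.src e = G.tgt e) (S : Set E) : G.kappa S = G.kappa (S \ {e}) := by
  unfold kappa
  refine Nat.card_congr (quotEquivAux _ _ (Equiv.refl V) ?_ ?_)
  · rintro a b ⟨f, hfS, hf⟩
    by_cases hfe : f = e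
    · subst hfe
      rcases hf with ⟨h1, h2⟩ | ⟨h1, h2⟩ <;> simp only [Equiv.refl_apply] <;>
        rw [← h1, ← h2, hloop]
    · exact Quot.sound ⟨f, ⟨hfS, hfe⟩, hf⟩
  · rintro a b ⟨f, hfS, hf⟩
    exact Quot.sound ⟨f, hfS.1, hf⟩

lemma kappa_del (S' : Set {f : E // f ≠ e}) :
    (G.del e).kappa S' = G.kappa (Subtype.val '' S') := by
  unfold kappa
  refine Nat.card_congr (quotEquivAux _ _ (Equiv.refl V) ?_ ?_)
  · rintro a b ⟨f, hf, h⟩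
    exact Quot.sound ⟨f.1, ⟨f, hf, rfl⟩, h⟩
  · rintro a b ⟨f, ⟨f', hf', rfl⟩, h⟩
    exact Quot.sound ⟨f', hf', h⟩

/-- Since `e` is a loop, the vertex set of the contraction is in bijection with `V`. -/
def contrVEquiv (hloop : G.src e = G.tgt e) : V ≃ Quot (fun a b => a = G.src e ∧ b = G.tgt e) where
  toFun := Quot.mk _
  invFun := Quot.lift id (fun a b h => h.1.trans (hloop.trans h.2.symm))
  left_inv a := rfl
  right_inv q := Quot.inductionOn q fun a => rfl

lemma contr_mk_inj (hloop : G.src e = G.tgt e) {a b : V} (h : (Quot.mk (fun a b => a = G.src e ∧ b = G.tgt e) a : Quot _) = Quot.mk _ b) : a = b := by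
  have := congrArg (G.contrVEquiv e hloop).symm h
  simpa [contrVEquiv] using this

lemma kappa_contr (hloop : G.src e = G.tgt e) (S' : Set {f : E // f ≠ e}) :
    (G.contr e).kappa S' = G.kappa (Subtype.val '' S') := by
  unfold kappa
  refine Nat.card_congr (quotEquivAux _ _ (G.contrVEquiv e hloop).symm ?_ ?_)
  · rintro a b ⟨f, hf, h⟩
    rcases h with ⟨h1, h2⟩ | ⟨h1, h2⟩ <;> rw [← h1, ← h2] <;>
    · show Quot.mk _ _ = Quot.mk _ _
      exact Quot.sound ⟨f.1, ⟨f, hf, rfl⟩, by simp [contr, contrVEquiv]⟩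
  · rintro a b ⟨f, ⟨f', hf', rfl⟩, h⟩
    show Quot.mk _ _ = Quot.mk _ _
    refine Quot.sound ⟨f', hf', ?_⟩
    rcases h with ⟨h1, h2⟩ | ⟨h1, h2⟩
    · exact Or.inl ⟨congrArg (Quot.mk _) h1, congrArg (Quot.mk _) h2⟩
    · exact Or.inr ⟨congrArg (Quot.mk _) h1, congrArg (Quot.mk _) h2⟩

lemma image_preimage_val {C : Set E} (heC : e ∉ C) :
    Subtype.val '' (Subtype.val ⁻¹' C : Set {f : E // f ≠ e}) = C := by
  ext x
  constructor
  · rintro ⟨f, hf, rfl⟩; exact hf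
  · intro hx; exact ⟨⟨x, fun h => heC (h ▸ hx)⟩, hx, rfl⟩

lemma image_compl_eq (D' : Set {f : E // f ≠ e}) :
    (Subtype.val '' D')ᶜ = insert e (Subtype.val '' D'ᶜ) := by
  ext x
  simp only [Set.mem_compl_iff, Set.mem_insert_iff, Set.mem_image]
  constructor
  · intro h
    by_cases hx : x = e
    · exact Or.inl hx
    · exact Or.inr ⟨⟨x, hx⟩, fun hm => h ⟨⟨x, hx⟩, hm, rfl⟩, rfl⟩
  · rintro (rfl | ⟨y, hy, rfl⟩) ⟨z, hz, hzx⟩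
    · exact z.2 hzx
    · exact hy (by rwa [show z = y from Subtype.ext hzx] at hz)

lemma kappa_del_compl (hloop : G.src e = G.tgt e) (D' : Set {f : E // f ≠ e}) :
    G.kappa (Subtype.val '' D')ᶜ = (G.del e).kappa D'ᶜ := by
  have he : e ∉ Subtype.val '' (D'ᶜ : Set {f : E // f ≠ e}) := by
    rintro ⟨z, _, hz⟩; exact z.2 hz
  calc G.kappa (Subtype.val '' D')ᶜ
      = G.kappa (insert e (Subtype.val '' D'ᶜ)) := by rw [image_compl_eq]
    _ = G.kappa (insert e (Subtype.val '' D'ᶜ) \ {e}) := kappa_diff G e hloop _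
    _ = G.kappa (Subtype.val '' D'ᶜ) := by
          rw [Set.insert_diff_self_of_notMem he]
    _ = (G.del e).kappa D'ᶜ := (kappa_del G e _).symm

lemma kappa_univ_del (hloop : G.src e = G.tgt e) :
    (G.del e).kappa Set.univ = G.kappa Set.univ := by
  rw [kappa_del, kappa_diff G e hloop Set.univ]
  congr 1
  ext x
  constructor
  · rintro ⟨z, -, rfl⟩; exact ⟨trivial, z.2⟩
  · rintro ⟨-, hx⟩; exact ⟨⟨x, hx⟩, trivial, rfl⟩

lemma kappa_contr_eq_del (hloop : G.src e = G.tgt e) (S' : Set {f : E // f ≠ e}) :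
    (G.contr e).kappa S' = (G.del e).kappa S' := by
  rw [kappa_contr G e hloop, kappa_del]

lemma not_mem_cut (hloop : G.src e = G.tgt e) {C : Set E} (hC : G.IsCut C) : e ∉ C := by
  intro he
  obtain ⟨hne, hgt, hmin⟩ := hC
  by_cases h1 : C = {e}
  · subst h1
    rw [show ({e} : Set E)ᶜ = Set.univ \ {e} from Set.compl_eq_univ_diff _,
      ← kappa_diff G e hloop] at hgt
    exact lt_irrefl _ hgt
  · have hCe : (C \ {e}).Nonempty := by
      rw [Set.nonempty_iff_ne_empty]
      intro h
      exact h1 (Set.Subset.antisymm (Set.diff_eq_empty.mp h)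
        (Set.singleton_subset_iff.mpr he))
    have hss : C \ {e} ⊂ C := Set.sdiff_singleton_ssubset.mpr he
    have heq : G.kappa (C \ {e})ᶜ = G.kappa Cᶜ := by
      rw [show (C \ {e})ᶜ = Cᶜ ∪ {e} by rw [Set.diff_eq, Set.compl_inter, compl_compl],
        kappa_diff G e hloop (Cᶜ ∪ {e}), Set.union_diff_right, ← kappa_diff G e hloop]
    exact hmin (C \ {e}) hss hCe (by rw [heq]; exact hgt)

lemma isCut_del_iff (hloop : G.src e = G.tgt e) {C : Set E} (heC : e ∉ C) :
    G.IsCut C ↔ (G.del e).IsCut (Subtype.val ⁻¹' C) := by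
  constructor
  · rintro ⟨hne, hgt, hmin⟩
    refine ⟨?_, ?_, ?_⟩
    · obtain ⟨x, hx⟩ := hne
      exact ⟨⟨x, fun h => heC (h ▸ hx)⟩, hx⟩
    · rw [← kappa_del_compl G e hloop, image_preimage_val e heC, kappa_univ_del G e hloop]
      exact hgt
    · intro D' hsub hne' hgt'
      have himg : Subtype.val '' D' ⊆ C :=
        (Set.image_mono hsub.subset).trans (image_preimage_val e heC).subset
      have hne2 : Subtype.val '' D' ≠ C := by
        intro hEq
        apply hsub.ne
        rw [← Set.preimage_image_eq D' Subtype.val_injective, hEq]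
      exact hmin _ (Set.ssubset_iff_subset_ne.mpr ⟨himg, hne2⟩) (hne'.image _)
        (by rw [kappa_del_compl G e hloop, ← kappa_univ_del G e hloop]; exact hgt')
  · rintro ⟨hne, hgt, hmin⟩
    refine ⟨?_, ?_, ?_⟩
    · obtain ⟨x, hx⟩ := hne; exact ⟨x.1, hx⟩
    · rw [← kappa_univ_del G e hloop, ← image_preimage_val e heC,
        kappa_del_compl G e hloop]
      exact hgt
    · intro C' hsub hne' hgt'
      have heC' : e ∉ C' := fun h => heC (hsub.subset h)
      have h1 : (Subtype.val ⁻¹' C' : Set {f : E // f ≠ e}) ⊂ Subtype.val ⁻¹' C := by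
        refine Set.ssubset_iff_subset_ne.mpr ⟨Set.preimage_mono hsub.subset, ?_⟩
        intro hEq
        apply hsub.ne
        rw [← image_preimage_val e heC', hEq, image_preimage_val e heC]
      obtain ⟨x, hx⟩ := hne'
      exact hmin _ h1 ⟨⟨x, fun h => heC' (h ▸ hx)⟩, hx⟩
        (by rw [← kappa_del_compl G e hloop, image_preimage_val e heC',
              kappa_univ_del G e hloop]; exact hgt')

lemma isCut_contr_iff_del (hloop : G.src e = G.tgt e) (C' : Set {f : E // f ≠ e}) :
    (G.contr e).IsCut C' ↔ (G.del e).IsCut C' := by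
  unfold IsCut
  simp only [kappa_contr_eq_del G e hloop]

lemma cut_inter_singleton (hloop : G.src e = G.tgt e) :
    ∀ Cu : Set E, G.IsCut Cu → (Cu ∩ ({e} : Set E)).ncard ≠ 1 := by
  intro Cu hCu
  have : Cu ∩ ({e} : Set E) = ∅ := by
    ext x
    simp only [Set.mem_inter_iff, Set.mem_singleton_iff, Set.mem_empty_iff_false,
      iff_false, not_and]
    rintro hx rfl
    exact not_mem_cut G _ hloop hCu hx
  simp [this]

lemma isCycle_singleton (hloop : G.src e = G.tgt e) : G.IsCycle ({e} : Set E) := by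
  refine ⟨⟨e, rfl⟩, cut_inter_singleton G e hloop, ?_⟩
  intro C' hsub hne
  rw [Set.ssubset_singleton_iff.mp hsub] at hne
  exact absurd hne (by simp)

lemma cycle_mem_loop (hloop : G.src e = G.tgt e) {C : Set E}
    (hC : G.IsCycle C) (he : e ∈ C) : C = {e} := by
  by_contra h
  have hss : ({e} : Set E) ⊂ C :=
    Set.ssubset_iff_subset_ne.mpr ⟨Set.singleton_subset_iff.mpr he, fun hEq => h hEq.symm⟩
  exact hC.2.2 {e} hss ⟨e, rfl⟩ (cut_inter_singleton G e hloop)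

lemma isCycle_del_iff (hloop : G.src e = G.tgt e) {C : Set E} (heC : e ∉ C) :
    G.IsCycle C ↔ (G.del e).IsCycle (Subtype.val ⁻¹' C) := by
  have himg : ∀ (A : Set {f : E // f ≠ e}) (B : Set E), e ∉ B →
      ((A ∩ Subtype.val ⁻¹' B).ncard = (Subtype.val '' A ∩ B).ncard) := by
    intro A B heB
    rw [← Set.ncard_image_of_injective _ Subtype.val_injective,
      Set.image_inter Subtype.val_injective, image_preimage_val e heB]
  constructor
  · rintro ⟨hne, hcut, hmin⟩
    refine ⟨?_, ?_, ?_⟩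
    · obtain ⟨x, hx⟩ := hne
      exact ⟨⟨x, fun h => heC (h ▸ hx)⟩, hx⟩
    · intro Cu' hCu'
      have heCu : e ∉ Subtype.val '' Cu' := by rintro ⟨z, -, hz⟩; exact z.2 hz
      have hGcut : G.IsCut (Subtype.val '' Cu') := by
        rw [isCut_del_iff G e hloop heCu,
          Set.preimage_image_eq _ Subtype.val_injective]
        exact hCu'
      rw [himg _ _ heC]
      exact hcut _ hGcut
    · intro D' hsub hne' hforall
      have himg2 : Subtype.val '' D' ⊆ C :=
        (Set.image_mono hsub.subset).trans (image_preimage_val e heC).subset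
      have hne2 : Subtype.val '' D' ≠ C := by
        intro hEq
        exact hsub.ne (by rw [← Set.preimage_image_eq D' Subtype.val_injective, hEq])
      refine hmin _ (Set.ssubset_iff_subset_ne.mpr ⟨himg2, hne2⟩) (hne'.image _) ?_
      intro Cu hCu
      have heCu := not_mem_cut G e hloop hCu
      have heD : e ∉ Subtype.val '' D' := by rintro ⟨z, -, hz⟩; exact z.2 hz
      have h1 := hforall _ ((isCut_del_iff G e hloop heCu).mp hCu)
      rw [Set.inter_comm, ← himg D' Cu heCu, Set.inter_comm]
      exact h1
  · rintro ⟨hne, hcut, hmin⟩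
    refine ⟨?_, ?_, ?_⟩
    · obtain ⟨x, hx⟩ := hne; exact ⟨x.1, hx⟩
    · intro Cu hCu
      have heCu := not_mem_cut G e hloop hCu
      have h1 := hcut _ ((isCut_del_iff G e hloop heCu).mp hCu)
      rwa [himg _ _ heC, image_preimage_val e heCu] at h1
    · intro C' hsub hne' hforall
      have heC' : e ∉ C' := fun h => heC (hsub.subset h)
      have h1 : (Subtype.val ⁻¹' C' : Set {f : E // f ≠ e}) ⊂ Subtype.val ⁻¹' C := by
        refine Set.ssubset_iff_subset_ne.mpr ⟨Set.preimage_mono hsub.subset, ?_⟩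
        intro hEq
        exact hsub.ne (by rw [← image_preimage_val e heC', hEq, image_preimage_val e heC])
      obtain ⟨x, hx⟩ := hne'
      refine hmin _ h1 ⟨⟨x, fun h => heC' (h ▸ hx)⟩, hx⟩ ?_
      intro Cu' hCu'
      have heCu : e ∉ Subtype.val '' Cu' := by rintro ⟨z, -, hz⟩; exact z.2 hz
      have hGcut : G.IsCut (Subtype.val '' Cu') := by
        rw [isCut_del_iff G e hloop heCu,
          Set.preimage_image_eq _ Subtype.val_injective]
        exact hCu'
      rw [himg _ _ heC']
      exact hforall _ hGcut

lemma crossing_loop (hloop : G.src e = G.tgt e) (U : Set V) : ¬ G.crossing U e := by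
  unfold crossing
  rw [hloop]
  simp

lemma potCut_contr_iff (hloop : G.src e = G.tgt e) (F : E → Bool × Bool) {C : Set E}
    (heC : e ∉ C) :
    G.PotCut F C ↔ (G.contr e).PotCut (fun g => F g.1) (Subtype.val ⁻¹' C) := by
  constructor
  · rintro ⟨hcut, U, hcross, hor⟩
    refine ⟨(isCut_contr_iff_del G e hloop _).mpr ((isCut_del_iff G e hloop heC).mp hcut),
      (G.contrVEquiv e hloop).symm ⁻¹' U, ?_, ?_⟩
    · intro g
      show g.1 ∈ C ↔ _
      rw [hcross g.1]
      exact Iff.rfl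
    · intro g hg
      exact hor g.1 hg
  · rintro ⟨hcut, U', hcross, hor⟩
    refine ⟨(isCut_del_iff G e hloop heC).mpr ((isCut_contr_iff_del G e hloop _).mp hcut),
      (fun a => Quot.mk _ a) ⁻¹' U', ?_, ?_⟩
    · intro f
      by_cases hf : f = e
      · rw [hf]
        exact iff_of_false heC (crossing_loop G e hloop _)
      · exact hcross ⟨f, hf⟩
    · intro f hf
      have hf' : f ≠ e := fun h => heC (h ▸ hf)
      exact hor ⟨f, hf'⟩ hf

lemma potCycle_del_iff (hloop : G.src e = G.tgt e) (F : E → Bool × Bool) (dir : E → Bool)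
    {C : Set E} (heC : e ∉ C) :
    G.PotCycle F C dir ↔
      (G.del e).PotCycle (fun g => F g.1) (Subtype.val ⁻¹' C) (fun g => dir g.1) := by
  have hsets : ∀ v : V,
      (Subtype.val '' {g ∈ (Subtype.val ⁻¹' C : Set {f : E // f ≠ e}) |
        (G.del e).ohead (fun g => dir g.1) g = v} = {f ∈ C | G.ohead dir f = v}) ∧
      (Subtype.val '' {g ∈ (Subtype.val ⁻¹' C : Set {f : E // f ≠ e}) |
        (G.del e).otail (fun g => dir g.1) g = v} = {f ∈ C | G.otail dir f = v}) := by
    intro v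
    constructor <;>
    · ext x
      constructor
      · rintro ⟨g, ⟨hgC, hgh⟩, rfl⟩
        exact ⟨hgC, hgh⟩
      · rintro ⟨hxC, hxh⟩
        exact ⟨⟨x, fun h => heC (h ▸ hxC)⟩, ⟨hxC, hxh⟩, rfl⟩
  constructor
  · rintro ⟨hcyc, hbal, hpres⟩
    refine ⟨(isCycle_del_iff G e hloop heC).mp hcyc, ?_, ?_⟩
    · intro v
      rw [← Set.ncard_image_of_injective _ Subtype.val_injective, (hsets v).1,
        ← Set.ncard_image_of_injective
          {g ∈ (Subtype.val ⁻¹' C : Set {f : E // f ≠ e}) |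
            (G.del e).otail (fun g => dir g.1) g = v} Subtype.val_injective,
        (hsets v).2]
      exact hbal v
    · intro g hg
      exact hpres g.1 hg
  · rintro ⟨hcyc, hbal, hpres⟩
    refine ⟨(isCycle_del_iff G e hloop heC).mpr hcyc, ?_, ?_⟩
    · intro v
      rw [← (hsets v).1, ← (hsets v).2,
        Set.ncard_image_of_injective _ Subtype.val_injective,
        Set.ncard_image_of_injective _ Subtype.val_injective]
      exact hbal v
    · intro f hf
      exact hpres ⟨f, fun h => heC (h ▸ hf)⟩ hf

lemma potCycle_singleton (hloop : G.src e = G.tgt e) (F : E → Bool × Bool) (dir : E → Bool)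
    (hd : (if dir e then (F e).1 else (F e).2) = true) :
    G.PotCycle F ({e} : Set E) dir := by
  refine ⟨isCycle_singleton G e hloop, ?_, ?_⟩
  · intro v
    have : {f ∈ ({e} : Set E) | G.ohead dir f = v} = {f ∈ ({e} : Set E) | G.otail dir f = v} := by
      ext x
      simp only [Set.mem_setOf_eq, Set.mem_singleton_iff]
      constructor
      · rintro ⟨rfl, h⟩
        refine ⟨rfl, ?_⟩
        rw [← h]
        unfold ohead otail
        rcases Bool.dichotomy (dir x) with hh | hh <;> simp [hh, hloop]
      · rintro ⟨rfl, h⟩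
        refine ⟨rfl, ?_⟩
        rw [← h]
        unfold ohead otail
        rcases Bool.dichotomy (dir x) with hh | hh <;> simp [hh, hloop]
    rw [this]
  · intro f hf
    rw [Set.mem_singleton_iff.mp hf]
    exact hd

lemma restrict_update [DecidableEq E] (F : E → Bool × Bool) {f : E} (hf : f ≠ e) (v : Bool × Bool) :
    (fun g : {x : E // x ≠ e} => Function.update F f v g.1) =
      Function.update (fun g : {x : E // x ≠ e} => F g.1) ⟨f, hf⟩ v := by
  funext g
  by_cases h : g = (⟨f, hf⟩ : {x : E // x ≠ e})
  · subst h
    simp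
  · rw [Function.update_of_ne h, Function.update_of_ne (fun hh => h (Subtype.ext hh))]

lemma restrict_addDir [DecidableEq E] (F : E → Bool × Bool) {f : E} (hf : f ≠ e) (d : Bool) :
    (fun g : {x : E // x ≠ e} => addDir F f d g.1) =
      addDir (fun g : {x : E // x ≠ e} => F g.1) ⟨f, hf⟩ d :=
  restrict_update e F hf _

lemma restrict_remDir [DecidableEq E] (F : E → Bool × Bool) {f : E} (hf : f ≠ e) (d : Bool) :
    (fun g : {x : E // x ≠ e} => remDir F f d g.1) =
      remDir (fun g : {x : E // x ≠ e} => F g.1) ⟨f, hf⟩ d :=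
  restrict_update e F hf _

end Loop

end RefGraph

/-- loop case: if the maximum edge `e` is a loop then, for any
fourientation `O`: `I^o(O) = I^o(O/e)` and `I^u(O) = I^u(O/e)`; if `e` is
oriented then `L^o(O) = {e} ∪ L^o(O−e)` and `L^b(O) = L^b(O−e)`; if `e` is
bioriented then `L^o(O) = L^o(O−e)` and `L^b(O) = {e} ∪ L^b(O−e)`. -/
theorem loop_lemma {V E : Type} [Fintype V] [Fintype E] [LinearOrder E]
    (G : RefGraph V E) (σu σb : E → Bool) (e : E)
    (hmax : ∀ f : E, f ≤ e) (hloop : G.src e = G.tgt e) (F : E → Bool × Bool) :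
    G.Io F = Subtype.val '' (G.contr e).Io (fun f => F f.1) ∧
    G.Iu σu F =
      Subtype.val '' (G.contr e).Iu (fun f => σu f.1) (fun f => F f.1) ∧
    ((F e).1 ≠ (F e).2 →
      G.Lo F = {e} ∪ Subtype.val '' (G.del e).Lo (fun f => F f.1) ∧
      G.Lb σb F =
        Subtype.val '' (G.del e).Lb (fun f => σb f.1) (fun f => F f.1)) ∧
    (F e = (true, true) →
      G.Lo F = Subtype.val '' (G.del e).Lo (fun f => F f.1) ∧
      G.Lb σb F =
        {e} ∪ Subtype.val '' (G.del e).Lb (fun f => σb f.1) (fun f => F f.1)) := by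
  
  classical
  have val_inj : Function.Injective (Subtype.val : {f : E // f ≠ e} → E) :=
    Subtype.val_injective
  -- Part 1: Io
  have hIo : G.Io F = Subtype.val '' (G.contr e).Io (fun f => F f.1) := by
    ext f
    simp only [RefGraph.Io, Set.mem_setOf_eq, Set.mem_image]
    constructor
    · rintro ⟨hor, C, hPC, hfC, hmin⟩
      have heC : e ∉ C := RefGraph.not_mem_cut G e hloop hPC.1
      have hf : f ≠ e := fun h => heC (h ▸ hfC)
      refine ⟨⟨f, hf⟩, ⟨hor, Subtype.val ⁻¹' C,
        (RefGraph.potCut_contr_iff G e hloop F heC).mp hPC, hfC, ?_⟩, rfl⟩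
      intro g hg
      exact Subtype.coe_le_coe.mp (hmin g.1 hg)
    · rintro ⟨g, ⟨hor, C', hPC', hgC', hmin'⟩, rfl⟩
      have heC : e ∉ Subtype.val '' C' := by rintro ⟨z, -, hz⟩; exact z.2 hz
      refine ⟨hor, Subtype.val '' C', ?_, ⟨g, hgC', rfl⟩, ?_⟩
      · rw [RefGraph.potCut_contr_iff G e hloop F heC,
          Set.preimage_image_eq _ val_inj]
        exact hPC'
      · rintro x ⟨x', hx', rfl⟩
        exact Subtype.coe_le_coe.mpr (hmin' x' hx')
  -- Part 2: Iu
  have hIu : G.Iu σu F =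
      Subtype.val '' (G.contr e).Iu (fun f => σu f.1) (fun f => F f.1) := by
    ext f
    simp only [RefGraph.Iu, Set.mem_setOf_eq, Set.mem_image]
    constructor
    · rintro ⟨hFf, C, hPC, hfC, hmin⟩
      have heC : e ∉ C := RefGraph.not_mem_cut G e hloop hPC.1
      have hf : f ≠ e := fun h => heC (h ▸ hfC)
      have h2 := (RefGraph.potCut_contr_iff G e hloop (RefGraph.addDir F f (σu f)) heC).mp hPC
      rw [RefGraph.restrict_addDir e F hf (σu f)] at h2
      exact ⟨⟨f, hf⟩, ⟨hFf, Subtype.val ⁻¹' C, h2, hfC,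
        fun g hg => Subtype.coe_le_coe.mp (hmin g.1 hg)⟩, rfl⟩
    · rintro ⟨g, ⟨hFg, C', hPC', hgC', hmin'⟩, rfl⟩
      have heC : e ∉ Subtype.val '' C' := by rintro ⟨z, -, hz⟩; exact z.2 hz
      refine ⟨hFg, Subtype.val '' C', ?_, ⟨g, hgC', rfl⟩, ?_⟩
      · rw [RefGraph.potCut_contr_iff G e hloop (RefGraph.addDir F g.1 (σu g.1)) heC,
          Set.preimage_image_eq _ val_inj, RefGraph.restrict_addDir e F g.2]
        exact hPC'
      · rintro x ⟨x', hx', rfl⟩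
        exact Subtype.coe_le_coe.mpr (hmin' x' hx')
  -- Lo membership for non-loop edges
  have hLoNe : ∀ f : E, f ≠ e →
      (f ∈ G.Lo F ↔ f ∈ Subtype.val '' (G.del e).Lo (fun x => F x.1)) := by
    intro f hf
    simp only [RefGraph.Lo, Set.mem_setOf_eq, Set.mem_image]
    constructor
    · rintro ⟨hor, C, dir, hPC, hfC, hmin⟩
      have heC : e ∉ C := by
        intro he
        exact hf (by rw [RefGraph.cycle_mem_loop G e hloop hPC.1 he] at hfC; exact hfC)
      refine ⟨⟨f, hf⟩, ⟨hor, Subtype.val ⁻¹' C, fun x => dir x.1,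
        (RefGraph.potCycle_del_iff G e hloop F dir heC).mp hPC, hfC,
        fun g hg => Subtype.coe_le_coe.mp (hmin g.1 hg)⟩, rfl⟩
    · rintro ⟨g, ⟨hor, C', dir', hPC', hgC', hmin'⟩, rfl⟩
      have heC : e ∉ Subtype.val '' C' := by rintro ⟨z, -, hz⟩; exact z.2 hz
      have hdir : (fun x : {y : E // y ≠ e} =>
          if h : x.1 = e then true else dir' ⟨x.1, h⟩) = dir' := by
        funext x
        rw [dif_neg x.2]
      refine ⟨hor, Subtype.val '' C',
        (fun x => if h : x = e then true else dir' ⟨x, h⟩), ?_, ⟨g, hgC', rfl⟩, ?_⟩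
      · refine (RefGraph.potCycle_del_iff G e hloop F _ heC).mpr ?_
        rw [Set.preimage_image_eq _ val_inj, hdir]
        exact hPC'
      · rintro x ⟨x', hx', rfl⟩
        exact Subtype.coe_le_coe.mpr (hmin' x' hx')
  -- Lb membership for non-loop edges
  have hLbNe : ∀ f : E, f ≠ e →
      (f ∈ G.Lb σb F ↔
        f ∈ Subtype.val '' (G.del e).Lb (fun x => σb x.1) (fun x => F x.1)) := by
    intro f hf
    simp only [RefGraph.Lb, Set.mem_setOf_eq, Set.mem_image]
    constructor
    · rintro ⟨hFf, C, dir, hPC, hfC, hmin⟩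
      have heC : e ∉ C := by
        intro he
        exact hf (by rw [RefGraph.cycle_mem_loop G e hloop hPC.1 he] at hfC; exact hfC)
      have h2 := (RefGraph.potCycle_del_iff G e hloop (RefGraph.remDir F f (σb f)) dir heC).mp hPC
      rw [RefGraph.restrict_remDir e F hf (σb f)] at h2
      exact ⟨⟨f, hf⟩, ⟨hFf, Subtype.val ⁻¹' C, fun x => dir x.1, h2, hfC,
        fun g hg => Subtype.coe_le_coe.mp (hmin g.1 hg)⟩, rfl⟩
    · rintro ⟨g, ⟨hFg, C', dir', hPC', hgC', hmin'⟩, rfl⟩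
      have heC : e ∉ Subtype.val '' C' := by rintro ⟨z, -, hz⟩; exact z.2 hz
      have hdir : (fun x : {y : E // y ≠ e} =>
          if h : x.1 = e then true else dir' ⟨x.1, h⟩) = dir' := by
        funext x
        rw [dif_neg x.2]
      refine ⟨hFg, Subtype.val '' C',
        (fun x => if h : x = e then true else dir' ⟨x, h⟩), ?_, ⟨g, hgC', rfl⟩, ?_⟩
      · refine (RefGraph.potCycle_del_iff G e hloop (RefGraph.remDir F g.1 (σb g.1)) _ heC).mpr ?_
        rw [Set.preimage_image_eq _ val_inj, hdir, RefGraph.restrict_remDir e F g.2]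
        exact hPC'
      · rintro x ⟨x', hx', rfl⟩
        exact Subtype.coe_le_coe.mpr (hmin' x' hx')
  -- membership of the loop e itself
  have hLoE : e ∈ G.Lo F ↔ (F e).1 ≠ (F e).2 := by
    constructor
    · exact fun h => h.1
    · intro hor
      refine ⟨hor, {e}, fun _ => (F e).1,
        RefGraph.potCycle_singleton G e hloop F _ ?_, rfl, ?_⟩
      · cases h1 : (F e).1 <;> cases h2 : (F e).2 <;> simp_all
      · intro g hg
        rw [Set.mem_singleton_iff.mp hg]
  have hLbE : e ∈ G.Lb σb F ↔ F e = (true, true) := by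
    constructor
    · exact fun h => h.1
    · intro hbi
      refine ⟨hbi, {e}, fun _ => !(σb e),
        RefGraph.potCycle_singleton G e hloop _ _ ?_, rfl, ?_⟩
      · cases h1 : σb e <;>
          simp [RefGraph.remDir, Function.update_self, hbi, h1]
      · intro g hg
        rw [Set.mem_singleton_iff.mp hg]
  have heImLo : e ∉ Subtype.val '' (G.del e).Lo (fun x => F x.1) := by
    rintro ⟨z, -, hz⟩; exact z.2 hz
  have heImLb : e ∉ Subtype.val '' (G.del e).Lb (fun x => σb x.1) (fun x => F x.1) := by
    rintro ⟨z, -, hz⟩; exact z.2 hz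
  refine ⟨hIo, hIu, ?_, ?_⟩
  · intro hor
    constructor
    · ext f
      by_cases hf : f = e
      · rw [hf]
        simp only [Set.mem_union, Set.mem_singleton_iff]
        exact iff_of_true (hLoE.mpr hor) (Or.inl trivial)
      · rw [hLoNe f hf]
        simp only [Set.mem_union, Set.mem_singleton_iff, hf, false_or]
    · ext f
      by_cases hf : f = e
      · rw [hf]
        exact iff_of_false (fun h => hor (by rw [hLbE.mp h])) heImLb
      · exact hLbNe f hf
  · intro hbi
    constructor
    · ext f
      by_cases hf : f = e
      · rw [hf]
        exact iff_of_false (fun h => h.1 (by rw [hbi])) heImLo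
      · exact hLoNe f hf
    · ext f
      by_cases hf : f = e
      · rw [hf]
        simp only [Set.mem_union, Set.mem_singleton_iff]
        exact iff_of_true (hLbE.mpr hbi) (Or.inl trivial)
      · rw [hLbNe f hf]
        simp only [Set.mem_union, Set.mem_singleton_iff, hf, false_or]
end

section
/- Let G be a graph whose maximum edge e is neither an isthmus nor a loop, and let O be a fourientation of G in which e is unoriented. Then I^o(O) = I^o(O−e), I^u(O) = I^u(O−e), L^o(O) = L^o(O−e), and L^b(O) = L^b(O−e). -/
open scoped Classical

/-- A multigraph with a fixed reference orientation: each edge `e` has a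
source `src e` and a target `tgt e` (the positive direction `e⁺ = (src e, tgt e)`). -/
structure FGraph (V E : Type) where
  src : E → V
  tgt : E → V

namespace FGraph

variable {V E : Type} (G : FGraph V E)

/-- Two vertices are joined by some edge of `S`. -/
def step (S : Set E) (a b : V) : Prop :=
  ∃ e ∈ S, (G.src e = a ∧ G.tgt e = b) ∨ (G.src e = b ∧ G.tgt e = a)

/-- `κ(S)`: the number of connected components of the spanning subgraph `(V, S)`. -/
noncomputable def kappa (S : Set E) : ℕ :=
  Nat.card (Quot (G.step S))

/-- A cut of `G`: a minimal nonempty edge set whose removal increases the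
number of connected components. -/
def IsCut (C : Set E) : Prop :=
  C.Nonempty ∧ G.kappa Cᶜ > G.kappa Set.univ ∧
    ∀ C' : Set E, C' ⊂ C → C'.Nonempty → ¬ (G.kappa C'ᶜ > G.kappa Set.univ)

/-- A cycle of `G`: a minimal nonempty edge set meeting no cut of `G` in
precisely one element. -/
def IsCycle (C : Set E) : Prop :=
  C.Nonempty ∧ (∀ Cu : Set E, G.IsCut Cu → (Cu ∩ C).ncard ≠ 1) ∧
    ∀ C' : Set E, C' ⊂ C → C'.Nonempty →
      ¬ (∀ Cu : Set E, G.IsCut Cu → (Cu ∩ C').ncard ≠ 1)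

/-- Head of edge `e` under orientation `O` (`O e = true` means the reference
direction `src e → tgt e`). -/
def ohead (O : E → Bool) (e : E) : V := if O e then G.tgt e else G.src e

/-- Tail of edge `e` under orientation `O`. -/
def otail (O : E → Bool) (e : E) : V := if O e then G.src e else G.tgt e

/-- Edge `e` crosses the vertex set `U` (exactly one endpoint in `U`). -/
def crossing (U : Set V) (e : E) : Prop := G.src e ∈ U ↔ G.tgt e ∉ U

/-- A directed cut of the orientation `O`: a cut all of whose edges are
oriented consistently out of some vertex set `U`. -/
def IsDirCut (O : E → Bool) (C : Set E) : Prop :=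
  G.IsCut C ∧ ∃ U : Set V, (∀ e, e ∈ C ↔ G.crossing U e) ∧ ∀ e ∈ C, G.otail O e ∈ U

/-- A directed cycle of the orientation `O`: a cycle oriented consistently,
i.e. in-degree equals out-degree at each vertex within the cycle. -/
def IsDirCycle (O : E → Bool) (C : Set E) : Prop :=
  G.IsCycle C ∧ ∀ v : V,
    {e ∈ C | G.ohead O e = v}.ncard = {e ∈ C | G.otail O e = v}.ncard

section Activities

variable [LinearOrder E]

/-- `Î(S)`: cut active edges of the spanning subgraph `S`. -/
def Iact (S : Set E) : Set E :=
  {e | ∃ C : Set E, G.IsCut C ∧ e ∈ C ∧ (∀ f ∈ C, f ≠ e → f ∉ S) ∧ ∀ f ∈ C, e ≤ f}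

/-- `L̂(S)`: cycle active edges of the spanning subgraph `S`. -/
def Lact (S : Set E) : Set E :=
  {e | ∃ C : Set E, G.IsCycle C ∧ e ∈ C ∧ (∀ f ∈ C, f = e ∨ f ∈ S) ∧ ∀ f ∈ C, e ≤ f}

/-- `I(O)`: cut active edges of the orientation `O`. -/
def Ior (O : E → Bool) : Set E :=
  {e | ∃ C : Set E, G.IsDirCut O C ∧ e ∈ C ∧ ∀ f ∈ C, e ≤ f}

/-- `L(O)`: cycle active edges of the orientation `O`. -/
def Lor (O : E → Bool) : Set E :=
  {e | ∃ C : Set E, G.IsDirCycle O C ∧ e ∈ C ∧ ∀ f ∈ C, e ≤ f}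

end Activities

/-- The Tutte polynomial via the corank-nullity expansion, evaluated in a
commutative ring. -/
noncomputable def tutte [Fintype V] [Fintype E] (R : Type) [CommRing R] (x y : R) : R :=
  ∑ S : Finset E, (x - 1) ^ (G.kappa ↑S - G.kappa Set.univ) *
    (y - 1) ^ (S.card + G.kappa ↑S - Fintype.card V)

/-! ### Fourientations.
A fourientation is `F : E → Bool × Bool`, recording whether `e⁺` resp. `e⁻`
belongs to the fourientation. -/

/-- A potential cut of the fourientation `F`: a directed cut each of whose
edges is unoriented in `F` or oriented in the cut direction (out of `U`). -/
def PotCut (F : E → Bool × Bool) (C : Set E) : Prop :=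
  G.IsCut C ∧ ∃ U : Set V, (∀ e, e ∈ C ↔ G.crossing U e) ∧
    ∀ e ∈ C, (G.src e ∈ U → (F e).2 = false) ∧ (G.src e ∉ U → (F e).1 = false)

/-- A potential cycle of the fourientation `F`, with cyclic direction `dir`:
a consistently directed cycle each of whose edges has its `dir`-direction
present in `F` (so each edge is bioriented or oriented in the cycle direction). -/
def PotCycle (F : E → Bool × Bool) (C : Set E) (dir : E → Bool) : Prop :=
  G.IsCycle C ∧
    (∀ v : V, {e ∈ C | G.ohead dir e = v}.ncard = {e ∈ C | G.otail dir e = v}.ncard) ∧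
    ∀ e ∈ C, (if dir e then (F e).1 else (F e).2) = true

/-- Add the direction `d` of edge `e` to the fourientation `F`. -/
def addDir [DecidableEq E] (F : E → Bool × Bool) (e : E) (d : Bool) : E → Bool × Bool :=
  Function.update F e (if d then (true, (F e).2) else ((F e).1, true))

/-- Remove the direction `d` of edge `e` from the fourientation `F`. -/
def remDir [DecidableEq E] (F : E → Bool × Bool) (e : E) (d : Bool) : E → Bool × Bool :=
  Function.update F e (if d then (false, (F e).2) else ((F e).1, false))

/-- `ᵉO`: toggle the status of the edge `e` in the fourientation `F`. -/
def toggle [DecidableEq E] (F : E → Bool × Bool) (e : E) : E → Bool × Bool :=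
  Function.update F e ((F e).2, (F e).1)

section FourActivities

variable [LinearOrder E]

/-- `I^o(O)`: oriented edges that are minimal in some potential cut. -/
def Io (F : E → Bool × Bool) : Set E :=
  {f | (F f).1 ≠ (F f).2 ∧ ∃ C : Set E, G.PotCut F C ∧ f ∈ C ∧ ∀ g ∈ C, f ≤ g}

/-- `L^o(O)`: oriented edges that are minimal in some potential cycle. -/
def Lo (F : E → Bool × Bool) : Set E :=
  {f | (F f).1 ≠ (F f).2 ∧
    ∃ (C : Set E) (dir : E → Bool), G.PotCycle F C dir ∧ f ∈ C ∧ ∀ g ∈ C, f ≤ g}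

/-- `I^u(O)`: unoriented edges `f` minimal in some potential cut of
`O ∪ {f^{σᵤ(f)}}`. -/
def Iu (σu : E → Bool) (F : E → Bool × Bool) : Set E :=
  {f | F f = (false, false) ∧
    ∃ C : Set E, G.PotCut (addDir F f (σu f)) C ∧ f ∈ C ∧ ∀ g ∈ C, f ≤ g}

/-- `L^b(O)`: bioriented edges `f` minimal in some potential cycle of
`O \ {f^{σ_b(f)}}`. -/
def Lb (σb : E → Bool) (F : E → Bool × Bool) : Set E :=
  {f | F f = (true, true) ∧
    ∃ (C : Set E) (dir : E → Bool),
      G.PotCycle (remDir F f (σb f)) C dir ∧ f ∈ C ∧ ∀ g ∈ C, f ≤ g}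

end FourActivities

/-- The deletion `G − e`. -/
def del (e : E) : FGraph V {f : E // f ≠ e} :=
  ⟨fun f => G.src f.1, fun f => G.tgt f.1⟩

/-- The contraction `G/e`: identify the endpoints of `e` and remove `e`. -/
def contr (e : E) : FGraph (Quot (fun a b => a = G.src e ∧ b = G.tgt e)) {f : E // f ≠ e} :=
  ⟨fun f => Quot.mk _ (G.src f.1), fun f => Quot.mk _ (G.tgt f.1)⟩

/-! ### Potential walks in a fourientation. A walk step is a pair `(e, d)` of an
edge and a chosen direction (`d = true` for the reference direction). -/

/-- Tail of the directed edge `(e, d)`. -/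
def ftail (p : E × Bool) : V := if p.2 then G.src p.1 else G.tgt p.1

/-- Head of the directed edge `(e, d)`. -/
def fhead (p : E × Bool) : V := if p.2 then G.tgt p.1 else G.src p.1

/-- The direction `d` of `e` is present in the fourientation `F`. -/
def present (F : E → Bool × Bool) (p : E × Bool) : Prop :=
  (if p.2 then (F p.1).1 else (F p.1).2) = true

/-- A potential walk of the fourientation `F` from `a` to `b`: each step uses
a direction present in `F` (so each edge is bioriented or oriented
consistently with the walk). -/
def IsPWalk (F : E → Bool × Bool) : V → List (E × Bool) → V → Prop
  | a, [], b => a = b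
  | a, p :: rest, b => G.ftail p = a ∧ present F p ∧ IsPWalk F (G.fhead p) rest b

/-- A potential path: a potential walk visiting pairwise distinct vertices. -/
def IsPPath (F : E → Bool × Bool) (a : V) (w : List (E × Bool)) (b : V) : Prop :=
  G.IsPWalk F a w b ∧ (a :: w.map G.fhead).Nodup

end FGraph
namespace FGraph

variable {V E : Type} (G : FGraph V E)

/-- Connectivity via edges of `S`. -/
abbrev conn (S : Set E) : V → V → Prop := Relation.EqvGen (G.step S)

lemma step_mono {S T : Set E} (h : S ⊆ T) {a b : V} (hs : G.step S a b) :
    G.step T a b := by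
  obtain ⟨g, hg, ho⟩ := hs; exact ⟨g, h hg, ho⟩

lemma conn_mono {S T : Set E} (h : S ⊆ T) {a b : V} (hc : G.conn S a b) :
    G.conn T a b :=
  Relation.EqvGen.mono (r := G.step S) (p := G.step T) (fun _ _ hs => G.step_mono h hs) a b hc

lemma conn_step {S : Set E} {a b : V} (h : G.step S a b) : G.conn S a b :=
  Relation.EqvGen.rel _ _ h

lemma conn_refl {S : Set E} (a : V) : G.conn S a a := Relation.EqvGen.refl a

lemma conn_symm {S : Set E} {a b : V} (h : G.conn S a b) : G.conn S b a :=
  Relation.EqvGen.symm _ _ h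

lemma conn_trans {S : Set E} {a b c : V} (h : G.conn S a b) (h' : G.conn S b c) :
    G.conn S a c := Relation.EqvGen.trans _ _ _ h h'

lemma conn_edge {S : Set E} {g : E} (hg : g ∈ S) : G.conn S (G.src g) (G.tgt g) :=
  G.conn_step ⟨g, hg, Or.inl ⟨rfl, rfl⟩⟩

/-- The canonical surjection between component quotients. -/
noncomputable def quotMap (S T : Set E) (h : S ⊆ T) :
    Quot (G.step S) → Quot (G.step T) :=
  Quot.map id (fun _ _ hs => G.step_mono h hs)

lemma quotMap_mk (S T : Set E) (h : S ⊆ T) (v : V) :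
    G.quotMap S T h (Quot.mk _ v) = Quot.mk _ v := rfl

lemma quotMap_surjective (S T : Set E) (h : S ⊆ T) :
    Function.Surjective (G.quotMap S T h) := by
  intro q; induction q using Quot.ind with
  | _ v => exact ⟨Quot.mk _ v, rfl⟩

instance finiteQuot [Finite V] (S : Set E) : Finite (Quot (G.step S)) :=
  Finite.of_surjective (Quot.mk _) Quot.mk_surjective

lemma card_lt_aux {α β : Type} [Finite α] {f : α → β} (hs : Function.Surjective f)
    {a b : α} (hab : a ≠ b) (hfab : f a = f b) : Nat.card β < Nat.card α := by
  have : Finite β := Finite.of_surjective f hs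
  classical
  have iα := Fintype.ofFinite α
  have iβ := Fintype.ofFinite β
  rw [Nat.card_eq_fintype_card, Nat.card_eq_fintype_card]
  exact Fintype.card_lt_of_surjective_not_injective f hs (fun hi => hab (hi hfab))

lemma not_crossing_iff {U : Set V} {g : E} :
    ¬ G.crossing U g ↔ (G.src g ∈ U ↔ G.tgt g ∈ U) := by
  unfold crossing; tauto

/-- Membership in `U` is invariant under connectivity through non-crossing edges. -/
lemma conn_side {U : Set V} {S : Set E} (hS : ∀ g ∈ S, ¬ G.crossing U g) {a b : V}
    (h : G.conn S a b) : a ∈ U ↔ b ∈ U := by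
  induction h with
  | rel x y hxy =>
      obtain ⟨g, hg, ho⟩ := hxy
      have := (G.not_crossing_iff).1 (hS g hg)
      rcases ho with ⟨h1, h2⟩ | ⟨h1, h2⟩ <;> rw [← h1, ← h2] <;> tauto
  | refl x => rfl
  | symm x y _ ih => exact ih.symm
  | trans x y z _ _ ih1 ih2 => exact ih1.trans ih2

/-- Removing a nonempty crossing set disconnects. -/
lemma kappa_crossing_lt [Finite V] (U : Set V) {g₀ : E} (hg : G.crossing U g₀) :
    G.kappa Set.univ < G.kappa {g | G.crossing U g}ᶜ := by
  refine card_lt_aux (f := G.quotMap {g | G.crossing U g}ᶜ Set.univ (Set.subset_univ _))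
    (G.quotMap_surjective _ _ _) (a := Quot.mk _ (G.src g₀)) (b := Quot.mk _ (G.tgt g₀))
    ?_ ?_
  · intro hcon
    rw [Quot.eq] at hcon
    have := G.conn_side (U := U) (S := {g | G.crossing U g}ᶜ) (fun g hg' => hg') hcon
    unfold crossing at hg; tauto
  · rw [quotMap_mk, quotMap_mk, Quot.eq]
    exact G.conn_edge (Set.mem_univ g₀)

/-- If every edge-step is `S`-connected, then `κ(S) = κ(univ)`. -/
lemma kappa_eq_univ {S : Set E} (h : ∀ a b : V, G.step Set.univ a b → G.conn S a b) :
    G.kappa S = G.kappa Set.univ := by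
  apply Nat.card_eq_of_bijective (G.quotMap S Set.univ (Set.subset_univ _))
  constructor
  · intro q1 q2
    induction q1 using Quot.ind with
    | _ x =>
    induction q2 using Quot.ind with
    | _ y =>
    intro hq
    rw [quotMap_mk, quotMap_mk, Quot.eq] at hq
    rw [Quot.eq]
    induction hq with
    | rel a b hab => exact h a b hab
    | refl a => exact G.conn_refl a
    | symm a b _ ih => exact G.conn_symm ih
    | trans a b c _ _ ih1 ih2 => exact G.conn_trans ih1 ih2
  · exact G.quotMap_surjective _ _ _

end FGraph
namespace FGraph

variable {V E : Type} (G : FGraph V E)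

lemma crossing_elim {U : Set V} {g : E} (h : G.crossing U g) :
    ∃ p q : V, ((G.src g = p ∧ G.tgt g = q) ∨ (G.src g = q ∧ G.tgt g = p)) ∧
      p ∈ U ∧ q ∉ U := by
  unfold crossing at h
  by_cases hs : G.src g ∈ U
  · exact ⟨G.src g, G.tgt g, Or.inl ⟨rfl, rfl⟩, hs, h.1 hs⟩
  · exact ⟨G.tgt g, G.src g, Or.inr ⟨rfl, rfl⟩, by tauto, hs⟩

set_option maxHeartbeats 1000000 in
lemma exists_bond [Finite V] [Fintype E] :
    ∀ (n : ℕ) (U : Set V) (f : E), {g | G.crossing U g}.ncard ≤ n → G.crossing U f →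
    ∃ U' : Set V, G.IsCut {g | G.crossing U' g} ∧ G.crossing U' f ∧
      ∀ g : E, G.crossing U' g → G.crossing U g ∧ (G.src g ∈ U' ↔ G.src g ∈ U) := by
  intro n
  induction n with
  | zero =>
      intro U f hle hf
      exfalso
      have hpos : 0 < {g | G.crossing U g}.ncard :=
        (Set.ncard_pos (Set.toFinite _)).2 ⟨f, hf⟩
      omega
  | succ n ih =>
    intro U f hle hf
    set D : Set E := {g | G.crossing U g} with hD
    obtain ⟨u, w, hor, hu, hw⟩ := G.crossing_elim hf
    have hDc : ∀ g ∈ Dᶜ, ¬ G.crossing U g := fun g hg => hg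
    -- the class of w
    set B : Set V := {v | G.conn Dᶜ w v} with hB
    have hBU : B ⊆ Uᶜ := by
      intro v hv
      have := G.conn_side hDc hv
      simp only [Set.mem_compl_iff]; tauto
    have hBiff : ∀ g ∉ D, (G.src g ∈ B ↔ G.tgt g ∈ B) := by
      intro g hg
      have hconn : G.conn Dᶜ (G.src g) (G.tgt g) := G.conn_edge hg
      constructor
      · intro h; exact G.conn_trans h hconn
      · intro h; exact G.conn_trans h (G.conn_symm hconn)
    set D₁ : Set E := {g | G.crossing Bᶜ g} with hD₁
    have hD₁sub : D₁ ⊆ D := by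
      intro g hg
      by_contra hgD
      have h1 := hBiff g hgD
      have h2 : G.src g ∈ Bᶜ ↔ G.tgt g ∉ Bᶜ := hg
      simp only [Set.mem_compl_iff] at h2
      tauto
    have hside1 : ∀ g ∈ D₁, (G.src g ∈ Bᶜ ↔ G.src g ∈ U) := by
      intro g hg
      have hcU : G.src g ∈ U ↔ G.tgt g ∉ U := hD₁sub hg
      have hcB : G.src g ∈ Bᶜ ↔ G.tgt g ∉ Bᶜ := hg
      have h1 : G.src g ∈ B → G.src g ∉ U := fun h => hBU h
      have h2 : G.tgt g ∈ B → G.tgt g ∉ U := fun h => hBU h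
      simp only [Set.mem_compl_iff] at *
      tauto
    have hwB : w ∈ B := G.conn_refl w
    have huB : u ∉ B := fun h => hBU h hu
    have hf1 : f ∈ D₁ := by
      show G.src f ∈ Bᶜ ↔ G.tgt f ∉ Bᶜ
      simp only [Set.mem_compl_iff]
      rcases hor with ⟨h1, h2⟩ | ⟨h1, h2⟩ <;> rw [h1, h2] <;> tauto
    by_cases hcase1 : D₁ = D
    case neg =>
      have hss : D₁ ⊂ D := ⟨hD₁sub, fun h => hcase1 (le_antisymm hD₁sub h)⟩
      have hlt : D₁.ncard < D.ncard := Set.ncard_lt_ncard hss (Set.toFinite _)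
      obtain ⟨U', hcut, hfU', hback⟩ := ih Bᶜ f (by rw [← hD₁]; omega) hf1
      refine ⟨U', hcut, hfU', fun g hg => ?_⟩
      obtain ⟨hcr, hiff⟩ := hback g hg
      exact ⟨hD₁sub hcr, hiff.trans (hside1 g hcr)⟩
    case pos =>
    -- the class of u
    set A : Set V := {v | G.conn Dᶜ u v} with hA
    have hAU : A ⊆ U := by
      intro v hv
      have := G.conn_side hDc hv
      tauto
    have hAiff : ∀ g ∉ D, (G.src g ∈ A ↔ G.tgt g ∈ A) := by
      intro g hg
      have hconn : G.conn Dᶜ (G.src g) (G.tgt g) := G.conn_edge hg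
      constructor
      · intro h; exact G.conn_trans h hconn
      · intro h; exact G.conn_trans h (G.conn_symm hconn)
    set D₂ : Set E := {g | G.crossing A g} with hD₂
    have hD₂sub : D₂ ⊆ D := by
      intro g hg
      by_contra hgD
      have h1 := hAiff g hgD
      have h2 : G.src g ∈ A ↔ G.tgt g ∉ A := hg
      tauto
    have hside2 : ∀ g ∈ D₂, (G.src g ∈ A ↔ G.src g ∈ U) := by
      intro g hg
      have hcU : G.src g ∈ U ↔ G.tgt g ∉ U := hD₂sub hg
      have hcA : G.src g ∈ A ↔ G.tgt g ∉ A := hg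
      have h1 : G.src g ∈ A → G.src g ∈ U := fun h => hAU h
      have h2 : G.tgt g ∈ A → G.tgt g ∈ U := fun h => hAU h
      tauto
    have huA : u ∈ A := G.conn_refl u
    have hwA : w ∉ A := fun h => hw (hAU h)
    have hf2 : f ∈ D₂ := by
      show G.src f ∈ A ↔ G.tgt f ∉ A
      rcases hor with ⟨h1, h2⟩ | ⟨h1, h2⟩ <;> rw [h1, h2] <;> tauto
    by_cases hcase2 : D₂ = D
    case neg =>
      have hss : D₂ ⊂ D := ⟨hD₂sub, fun h => hcase2 (le_antisymm hD₂sub h)⟩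
      have hlt : D₂.ncard < D.ncard := Set.ncard_lt_ncard hss (Set.toFinite _)
      obtain ⟨U', hcut, hfU', hback⟩ := ih A f (by rw [← hD₂]; omega) hf2
      refine ⟨U', hcut, hfU', fun g hg => ?_⟩
      obtain ⟨hcr, hiff⟩ := hback g hg
      exact ⟨hD₂sub hcr, hiff.trans (hside2 g hcr)⟩
    case pos =>
    -- D itself is a bond with shore A
    have hAB : ∀ g ∈ D, ∃ p q : V,
        ((G.src g = p ∧ G.tgt g = q) ∨ (G.src g = q ∧ G.tgt g = p)) ∧
          p ∈ A ∧ q ∈ B := by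
      intro g hg
      have hg2 : g ∈ D₂ := by rw [hcase2]; exact hg
      have hg1 : g ∈ D₁ := by rw [hcase1]; exact hg
      obtain ⟨p, q, hor', hp, hq⟩ := G.crossing_elim (hg : G.crossing U g)
      have hcA : G.src g ∈ A ↔ G.tgt g ∉ A := hg2
      have hcB' : G.src g ∈ Bᶜ ↔ G.tgt g ∉ Bᶜ := hg1
      have hcB : (G.src g ∉ B) ↔ (G.tgt g ∈ B) := by
        simp only [Set.mem_compl_iff] at hcB'; tauto
      refine ⟨p, q, hor', ?_, ?_⟩
      · rcases hor' with ⟨e1, e2⟩ | ⟨e1, e2⟩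
        · rw [e1, e2] at hcA
          have : q ∉ A := fun h => hq (hAU h)
          tauto
        · rw [e1, e2] at hcA
          have : q ∉ A := fun h => hq (hAU h)
          tauto
      · rcases hor' with ⟨e1, e2⟩ | ⟨e1, e2⟩
        · rw [e1, e2] at hcB
          have : p ∉ B := fun h => (hBU h) hp
          tauto
        · rw [e1, e2] at hcB
          have : p ∉ B := fun h => (hBU h) hp
          tauto
    refine ⟨A, ?_, hf2, fun g hg => ⟨hD₂sub hg, hside2 g hg⟩⟩
    show G.IsCut D₂
    rw [hcase2]
    refine ⟨⟨f, hf⟩, ?_, ?_⟩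
    · have : G.crossing A f := hf2
      have hlt := G.kappa_crossing_lt A this
      rw [← hD₂, hcase2] at hlt
      exact hlt
    · intro D' hss hne hgt
      obtain ⟨g₀, hg₀D, hg₀D'⟩ := Set.exists_of_ssubset hss
      have hsub' : D' ⊆ D := subset_of_ssubset hss
      have hkeq : G.kappa D'ᶜ = G.kappa Set.univ := by
        apply G.kappa_eq_univ
        intro a b hst
        obtain ⟨h, -, hor''⟩ := hst
        by_cases hhD' : h ∈ D'
        · obtain ⟨p, q, horh, hpA, hqB⟩ := hAB h (hsub' hhD')
          obtain ⟨p₀, q₀, hor₀, hp₀A, hq₀B⟩ := hAB g₀ hg₀D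
          have hDsub' : (Dᶜ : Set E) ⊆ D'ᶜ := Set.compl_subset_compl.2 hsub'
          have c1 : G.conn D'ᶜ u p := G.conn_mono hDsub' hpA
          have c2 : G.conn D'ᶜ u p₀ := G.conn_mono hDsub' hp₀A
          have c3 : G.conn D'ᶜ w q := G.conn_mono hDsub' hqB
          have c4 : G.conn D'ᶜ w q₀ := G.conn_mono hDsub' hq₀B
          have c5 : G.conn D'ᶜ p₀ q₀ := G.conn_step ⟨g₀, hg₀D', hor₀⟩
          have hpq : G.conn D'ᶜ p q :=
            G.conn_trans (G.conn_symm c1)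
              (G.conn_trans c2 (G.conn_trans c5 (G.conn_trans (G.conn_symm c4) c3)))
          obtain ⟨ha, hb⟩ | ⟨ha, hb⟩ := hor'' <;> rw [← ha, ← hb] <;>
            obtain ⟨e1, e2⟩ | ⟨e1, e2⟩ := horh <;> rw [e1, e2]
          · exact hpq
          · exact G.conn_symm hpq
          · exact G.conn_symm hpq
          · exact hpq
        · exact G.conn_step ⟨h, hhD', hor''⟩
      omega

end FGraph
namespace FGraph

variable {V E : Type} (G : FGraph V E)

lemma conn_crossing {T : Set E} {U : Set V} {a b : V} (h : G.conn T a b)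
    (hab : ¬ (a ∈ U ↔ b ∈ U)) : ∃ g ∈ T, G.crossing U g := by
  induction h with
  | rel p q hpq =>
      obtain ⟨g, hg, ho⟩ := hpq
      by_cases hc : G.crossing U g
      · exact ⟨g, hg, hc⟩
      · exfalso; rw [not_crossing_iff] at hc
        rcases ho with ⟨h1, h2⟩ | ⟨h1, h2⟩ <;> rw [h1, h2] at hc <;> tauto
  | refl p => exact absurd Iff.rfl hab
  | symm p q _ ih => exact ih (by tauto)
  | trans p q r _ _ ih1 ih2 =>
      by_cases hpq : p ∈ U ↔ q ∈ U
      · exact ih2 (by tauto)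
      · exact ih1 hpq

lemma cut_eq_crossing [Finite V] [Fintype E] {C : Set E} (hC : G.IsCut C) :
    ∃ U : Set V, C = {g | G.crossing U g} := by
  obtain ⟨hne, hgt, hmin⟩ := hC
  have hsurj := G.quotMap_surjective Cᶜ Set.univ (Set.subset_univ _)
  have hninj : ¬ Function.Injective (G.quotMap Cᶜ Set.univ (Set.subset_univ _)) := by
    intro hinj
    have := Nat.card_eq_of_bijective _ ⟨hinj, hsurj⟩
    unfold kappa at hgt
    omega
  rw [Function.not_injective_iff] at hninj
  obtain ⟨q1, q2, heq, hne'⟩ := hninj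
  obtain ⟨x, rfl⟩ := Quot.exists_rep q1
  obtain ⟨y, rfl⟩ := Quot.exists_rep q2
  rw [quotMap_mk, quotMap_mk, Quot.eq] at heq
  have hnconn : ¬ G.conn Cᶜ x y := fun h => hne' (Quot.eq.2 h)
  set U : Set V := {v | G.conn Cᶜ x v} with hU
  have hsub : {g | G.crossing U g} ⊆ C := by
    intro g hg
    by_contra hgC
    have hconn : G.conn Cᶜ (G.src g) (G.tgt g) := G.conn_edge hgC
    have hiff : G.src g ∈ U ↔ G.tgt g ∈ U :=
      ⟨fun h => G.conn_trans h hconn, fun h => G.conn_trans h (G.conn_symm hconn)⟩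
    exact (G.not_crossing_iff.2 hiff) hg
  have hxU : x ∈ U := G.conn_refl x
  have hyU : y ∉ U := hnconn
  obtain ⟨g₀, -, hg₀⟩ := G.conn_crossing (U := U) heq (by tauto)
  have hne2 : {g | G.crossing U g}.Nonempty := ⟨g₀, hg₀⟩
  refine ⟨U, ?_⟩
  by_contra hnec
  have hss : {g | G.crossing U g} ⊂ C := ⟨hsub, fun h => hnec (le_antisymm h hsub)⟩
  exact hmin _ hss hne2 (G.kappa_crossing_lt U hg₀)

lemma crossing_iff_headtail (dir : E → Bool) {U : Set V} {g : E} :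
    G.crossing U g ↔ ¬ (G.ohead dir g ∈ U ↔ G.otail dir g ∈ U) := by
  unfold crossing ohead otail
  cases hd : dir g <;> simp only [if_true, if_false, Bool.false_eq_true] <;> tauto

open scoped Classical in
lemma ncard_sep_toFinset [Fintype E] (C : Set E) (P : E → Prop) :
    {g | g ∈ C ∧ P g}.ncard = (C.toFinset.filter P).card := by
  rw [← Set.ncard_coe_finset]
  congr 1
  ext g
  simp [Set.mem_toFinset]

open scoped Classical in
lemma balanced_count [Fintype V] [Fintype E] (dir : E → Bool) {C : Set E}
    (hbal : ∀ v : V, {g | g ∈ C ∧ G.ohead dir g = v}.ncard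
      = {g | g ∈ C ∧ G.otail dir g = v}.ncard)
    (W : Set V) :
    {g | g ∈ C ∧ G.ohead dir g ∈ W}.ncard = {g | g ∈ C ∧ G.otail dir g ∈ W}.ncard := by
  rw [ncard_sep_toFinset, ncard_sep_toFinset]
  rw [Finset.card_eq_sum_card_fiberwise
    (f := G.ohead dir) (t := W.toFinset) (fun g hg => by
      simp only [Finset.mem_coe, Finset.mem_filter] at hg ⊢; simp [Set.mem_toFinset, hg.2])]
  rw [Finset.card_eq_sum_card_fiberwise
    (f := G.otail dir) (t := W.toFinset) (fun g hg => by
      simp only [Finset.mem_coe, Finset.mem_filter] at hg ⊢; simp [Set.mem_toFinset, hg.2])]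
  apply Finset.sum_congr rfl
  intro v hv
  have hv' : v ∈ W := Set.mem_toFinset.1 hv
  have h1 : (C.toFinset.filter (fun g => G.ohead dir g ∈ W)).filter
      (fun g => G.ohead dir g = v) = C.toFinset.filter (fun g => G.ohead dir g = v) := by
    ext g
    simp only [Finset.mem_filter]
    exact ⟨fun h => ⟨h.1.1, h.2⟩, fun h => ⟨⟨h.1, by rw [h.2]; exact hv'⟩, h.2⟩⟩
  have h2 : (C.toFinset.filter (fun g => G.otail dir g ∈ W)).filter
      (fun g => G.otail dir g = v) = C.toFinset.filter (fun g => G.otail dir g = v) := by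
    ext g
    simp only [Finset.mem_filter]
    exact ⟨fun h => ⟨h.1.1, h.2⟩, fun h => ⟨⟨h.1, by rw [h.2]; exact hv'⟩, h.2⟩⟩
  rw [h1, h2]
  have hb := hbal v
  rwa [ncard_sep_toFinset, ncard_sep_toFinset] at hb

open scoped Classical in
lemma balanced_cut_even [Fintype V] [Fintype E] (dir : E → Bool) {C : Set E}
    (hbal : ∀ v : V, {g | g ∈ C ∧ G.ohead dir g = v}.ncard
      = {g | g ∈ C ∧ G.otail dir g = v}.ncard)
    (U : Set V) : ({g | G.crossing U g} ∩ C).ncard ≠ 1 := by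
  set A2 : Finset E := C.toFinset.filter
    (fun g => G.ohead dir g ∈ U ∧ G.otail dir g ∉ U) with hA2
  set A3 : Finset E := C.toFinset.filter
    (fun g => G.otail dir g ∈ U ∧ G.ohead dir g ∉ U) with hA3
  set A1 : Finset E := C.toFinset.filter
    (fun g => G.ohead dir g ∈ U ∧ G.otail dir g ∈ U) with hA1
  have hcount := G.balanced_count dir hbal U
  rw [ncard_sep_toFinset, ncard_sep_toFinset] at hcount
  have hsplit1 : C.toFinset.filter (fun g => G.ohead dir g ∈ U) = A1 ∪ A2 := by
    ext g
    simp only [Finset.mem_filter, Finset.mem_union, hA1, hA2]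
    by_cases h : G.otail dir g ∈ U <;> tauto
  have hsplit2 : C.toFinset.filter (fun g => G.otail dir g ∈ U) = A1 ∪ A3 := by
    ext g
    simp only [Finset.mem_filter, Finset.mem_union, hA1, hA3]
    by_cases h : G.ohead dir g ∈ U <;> tauto
  have hd12 : Disjoint A1 A2 := by
    rw [Finset.disjoint_left]
    intro g h1 h2
    simp only [hA1, hA2, Finset.mem_filter] at h1 h2
    tauto
  have hd13 : Disjoint A1 A3 := by
    rw [Finset.disjoint_left]
    intro g h1 h2
    simp only [hA1, hA3, Finset.mem_filter] at h1 h2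
    tauto
  rw [hsplit1, hsplit2, Finset.card_union_of_disjoint hd12,
    Finset.card_union_of_disjoint hd13] at hcount
  have hA23 : A2.card = A3.card := by omega
  have hset : {g | G.crossing U g} ∩ C = ↑(A2 ∪ A3) := by
    ext g
    simp only [Set.mem_inter_iff, Set.mem_setOf_eq, Finset.coe_union, Set.mem_union,
      Finset.mem_coe, Finset.mem_filter, hA2, hA3, Set.mem_toFinset,
      G.crossing_iff_headtail dir]
    tauto
  rw [hset, Set.ncard_coe_finset, Finset.card_union_of_disjoint (by
    rw [Finset.disjoint_left]
    intro g h1 h2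
    simp only [hA2, hA3, Finset.mem_filter] at h1 h2
    tauto)]
  omega

end FGraph
namespace FGraph

variable {V E : Type} (G : FGraph V E)

/-- A directed walk: a list of edges each traversed according to `dir`. -/
def chain (dir : E → Bool) : V → List E → V → Prop
  | a, [], b => a = b
  | a, g :: l, b => G.otail dir g = a ∧ chain dir (G.ohead dir g) l b

@[simp] lemma chain_nil {dir : E → Bool} {a b : V} : G.chain dir a [] b ↔ a = b :=
  Iff.rfl

@[simp] lemma chain_cons {dir : E → Bool} {a b : V} {g : E} {l : List E} :
    G.chain dir a (g :: l) b ↔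
      G.otail dir g = a ∧ G.chain dir (G.ohead dir g) l b := Iff.rfl

lemma chain_append {dir : E → Bool} {a b c : V} {l m : List E}
    (h1 : G.chain dir a l b) (h2 : G.chain dir b m c) :
    G.chain dir a (l ++ m) c := by
  induction l generalizing a with
  | nil => rw [chain_nil] at h1; subst h1; exact h2
  | cons g t ih =>
      obtain ⟨hg, hc⟩ := h1
      exact ⟨hg, ih hc⟩

lemma chain_split {dir : E → Bool} {a b : V} {l₁ l₂ : List E} {g : E}
    (h : G.chain dir a (l₁ ++ g :: l₂) b) :
    G.chain dir a l₁ (G.otail dir g) ∧ G.chain dir (G.ohead dir g) l₂ b := by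
  induction l₁ generalizing a with
  | nil =>
      obtain ⟨hg, hc⟩ := h
      exact ⟨hg.symm, hc⟩
  | cons g' t ih =>
      obtain ⟨hg', hc⟩ := h
      obtain ⟨ih1, ih2⟩ := ih hc
      exact ⟨⟨hg', ih1⟩, ih2⟩

lemma chain_tails {dir : E → Bool} {a b : V} {l : List E} (h : G.chain dir a l b) :
    l.map (G.otail dir) ++ [b] = a :: l.map (G.ohead dir) := by
  induction l generalizing a with
  | nil => rw [chain_nil] at h; subst h; rfl
  | cons g t ih =>
      obtain ⟨hg, hc⟩ := h
      simpa [hg] using ih hc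

lemma chain_end_mem {dir : E → Bool} {a b : V} {l : List E} (h : G.chain dir a l b) :
    b = a ∨ b ∈ l.map (G.ohead dir) := by
  induction l generalizing a with
  | nil => exact Or.inl ((G.chain_nil.1 h).symm)
  | cons g t ih =>
      obtain ⟨-, hc⟩ := h
      rcases ih hc with h1 | h1
      · exact Or.inr (by rw [List.map_cons]; exact List.mem_cons.2 (Or.inl h1))
      · exact Or.inr (by rw [List.map_cons]; exact List.mem_cons_of_mem _ h1)

lemma chain_tail_mem {dir : E → Bool} {a b : V} {l : List E} {g : E}
    (h : G.chain dir a l b) (hg : g ∈ l) :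
    G.otail dir g = a ∨ G.otail dir g ∈ l.map (G.ohead dir) := by
  induction l generalizing a with
  | nil => cases hg
  | cons g' t ih =>
      obtain ⟨hg', hc⟩ := h
      rcases List.mem_cons.1 hg with rfl | h1
      · exact Or.inl hg'
      · rcases ih hc h1 with h2 | h2
        · exact Or.inr (by rw [List.map_cons]; exact List.mem_cons.2 (Or.inl h2))
        · exact Or.inr (by rw [List.map_cons]; exact List.mem_cons_of_mem _ h2)

lemma chain_simplify {dir : E → Bool} {a b : V} {l : List E} (h : G.chain dir a l b) :
    ∃ l' : List E, G.chain dir a l' b ∧ (∀ g ∈ l', g ∈ l) ∧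
      (a :: l'.map (G.ohead dir)).Nodup := by
  induction l generalizing a with
  | nil =>
      rw [chain_nil] at h; subst h
      exact ⟨[], rfl, by simp, by simp⟩
  | cons g t ih =>
    obtain ⟨hg, hc⟩ := h
    obtain ⟨t', hc', hsub, hnd⟩ := ih hc
    by_cases ha : a ∈ (G.ohead dir g) :: t'.map (G.ohead dir)
    · rcases List.mem_cons.1 ha with h1 | h1
      · exact ⟨t', h1 ▸ hc', fun x hx => List.mem_cons_of_mem _ (hsub x hx), h1 ▸ hnd⟩
      · obtain ⟨h', hht', hh⟩ := List.mem_map.1 h1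
        obtain ⟨r₁, r₂, rfl⟩ := List.append_of_mem hht'
        have hsp := G.chain_split hc'
        refine ⟨r₂, hh ▸ hsp.2, ?_, ?_⟩
        · intro x hx
          exact List.mem_cons_of_mem _ (hsub x (by simp [hx]))
        · have hsuf : List.Sublist (G.ohead dir h' :: r₂.map (G.ohead dir))
              (G.ohead dir g :: (r₁ ++ h' :: r₂).map (G.ohead dir)) := by
            simp only [List.map_append, List.map_cons]
            refine List.Sublist.cons _ ?_
            exact ((r₁.map (G.ohead dir)).sublist_append_right _)
          have := hnd.sublist hsuf
          rwa [hh] at this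
    · refine ⟨g :: t', G.chain_cons.2 ⟨hg, hc'⟩, ?_, ?_⟩
      · intro x hx
        rcases List.mem_cons.1 hx with rfl | h1
        · exact List.mem_cons_self
        · exact List.mem_cons_of_mem _ (hsub x h1)
      · exact List.nodup_cons.2 ⟨ha, hnd⟩

open scoped Classical in
lemma ncard_mem_list {cl : List E} (hnd : cl.Nodup) (P : E → Prop) :
    {g | g ∈ cl ∧ P g}.ncard = cl.countP (fun g => decide (P g)) := by
  have hset : {g | g ∈ cl ∧ P g} = ↑((cl.filter (fun g => decide (P g))).toFinset) := by
    ext g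
    simp [List.mem_filter]
  rw [hset, Set.ncard_coe_finset,
    List.toFinset_card_of_nodup (hnd.filter _), List.countP_eq_length_filter]

end FGraph
namespace FGraph

variable {V E : Type} (G : FGraph V E)

open scoped Classical in
/-- A closed directed walk with no repeated vertex is a potential cycle. -/
lemma cyclelist_potcycle [Fintype V] [Fintype E] (F : E → Bool × Bool) (dir : E → Bool)
    {cl : List E} {t : V} (hch : G.chain dir t cl t)
    (hnd : (cl.map (G.ohead dir)).Nodup) (hne : cl ≠ [])
    (hpres : ∀ g ∈ cl, (if dir g then (F g).1 else (F g).2) = true) :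
    G.PotCycle F {g | g ∈ cl} dir := by
  have hclnd : cl.Nodup := hnd.of_map
  -- balance
  have hbal : ∀ v : V, {g | g ∈ cl ∧ G.ohead dir g = v}.ncard
      = {g | g ∈ cl ∧ G.otail dir g = v}.ncard := by
    intro v
    have htl := G.chain_tails hch
    have hperm : (cl.map (G.otail dir)).Perm (cl.map (G.ohead dir)) := by
      have p1 : (t :: cl.map (G.ohead dir)).Perm (t :: cl.map (G.otail dir)) := by
        rw [← htl]
        exact List.perm_append_singleton _ _
      exact (p1.cons_inv).symm
    rw [ncard_mem_list hclnd, ncard_mem_list hclnd]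
    have c1 : cl.countP (fun g => decide (G.ohead dir g = v))
        = (cl.map (G.ohead dir)).countP (fun x => decide (x = v)) := by
      rw [List.countP_map]; rfl
    have c2 : cl.countP (fun g => decide (G.otail dir g = v))
        = (cl.map (G.otail dir)).countP (fun x => decide (x = v)) := by
      rw [List.countP_map]; rfl
    rw [c1, c2, hperm.countP_eq]
  refine ⟨⟨?_, ?_, ?_⟩, hbal, fun g hg => hpres g hg⟩
  · obtain ⟨g, hg⟩ := List.exists_mem_of_ne_nil cl hne
    exact ⟨g, hg⟩
  · intro Cu hCu
    obtain ⟨U, rfl⟩ := G.cut_eq_crossing hCu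
    exact G.balanced_cut_even dir hbal U
  · intro C'' hss hne''
    intro hall
    obtain ⟨f'', hf''⟩ := hne''
    obtain ⟨g₀, hg₀cl, hg₀C''⟩ := Set.exists_of_ssubset hss
    have hf''cl : f'' ∈ cl := hss.subset hf''
    obtain ⟨c₁, c₂, rfl⟩ := List.append_of_mem hf''cl
    obtain ⟨hsp1, hsp2⟩ := G.chain_split hch
    have hg₀ne : g₀ ≠ f'' := fun h => hg₀C'' (h ▸ hf'')
    have hg₀rest : g₀ ∈ c₂ ++ c₁ := by
      rcases List.mem_append.1 hg₀cl with h | h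
      · exact List.mem_append.2 (Or.inr h)
      · rcases List.mem_cons.1 h with h | h
        · exact absurd h hg₀ne
        · exact List.mem_append.2 (Or.inl h)
    obtain ⟨r₁, r₂, hrest⟩ := List.append_of_mem hg₀rest
    -- the rotated cycle
    have hrch : G.chain dir (G.otail dir f'') (f'' :: (c₂ ++ c₁)) (G.otail dir f'') :=
      G.chain_cons.2 ⟨rfl, G.chain_append hsp2 hsp1⟩
    have hpermcl : (f'' :: (c₂ ++ c₁)).Perm (c₁ ++ f'' :: c₂) := by
      have he : f'' :: (c₂ ++ c₁) = (f'' :: c₂) ++ c₁ := by simp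
      rw [he]
      exact List.perm_append_comm
    have hrnd : ((f'' :: (c₂ ++ c₁)).map (G.ohead dir)).Nodup :=
      ((hpermcl.map (G.ohead dir)).nodup_iff).2 hnd
    have hrmem : ∀ g, g ∈ f'' :: (c₂ ++ c₁) ↔ g ∈ c₁ ++ f'' :: c₂ :=
      fun g => hpermcl.mem_iff
    rw [hrest] at hrch hrnd
    -- split the rotated list as (f'' :: r₁) ++ (g₀ :: r₂)
    have hsplit : f'' :: (r₁ ++ g₀ :: r₂) = (f'' :: r₁) ++ (g₀ :: r₂) := by simp
    rw [hsplit] at hrnd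
    rw [List.map_append, List.nodup_append] at hrnd
    obtain ⟨hnd1, hnd2, hdisj⟩ := hrnd
    obtain ⟨hts, hcrest⟩ := G.chain_cons.1 hrch
    obtain ⟨hcr1, hcr2⟩ := G.chain_split (l₁ := r₁) hcrest
    set U : Set V := {v | v ∈ (f'' :: r₁).map (G.ohead dir)} with hU
    have hUnot : ∀ v ∈ (g₀ :: r₂).map (G.ohead dir), v ∉ U := by
      intro v hv hvU
      exact hdisj v hvU v hv rfl
    have hmU : G.otail dir f'' ∉ U := by
      rcases G.chain_end_mem hcr2 with h | h
      · exact hUnot _ (by rw [List.map_cons]; exact List.mem_cons.2 (Or.inl h))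
      · exact hUnot _ (by rw [List.map_cons]; exact List.mem_cons_of_mem _ h)
    have hheadU : G.ohead dir f'' ∈ U := by
      rw [hU]; rw [List.map_cons]; exact List.mem_cons.2 (Or.inl rfl)
    have hcrossf : G.crossing U f'' := by
      rw [G.crossing_iff_headtail dir]
      intro h
      exact hmU (h.1 hheadU)
    have hnotcross : ∀ g ∈ C'', g ≠ f'' → ¬ G.crossing U g := by
      intro g hgC hgne
      have hgcl : g ∈ c₁ ++ f'' :: c₂ := hss.subset hgC
      have hgrest : g ∈ r₁ ++ g₀ :: r₂ := by
        rw [← hrest]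
        rcases List.mem_cons.1 ((hrmem g).2 hgcl) with h | h
        · exact absurd h hgne
        · exact h
      rw [G.crossing_iff_headtail dir]
      intro hcr
      rcases List.mem_append.1 hgrest with h | h
      · -- g ∈ r₁ : head and tail both in U
        have hhU : G.ohead dir g ∈ U := by
          rw [hU]; rw [List.map_cons]
          exact List.mem_cons_of_mem _ (List.mem_map_of_mem h)
        have htU : G.otail dir g ∈ U := by
          rcases G.chain_tail_mem hcr1 h with h2 | h2
          · rw [hU, List.map_cons]; exact List.mem_cons.2 (Or.inl h2)
          · rw [hU, List.map_cons]; exact List.mem_cons_of_mem _ h2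
        exact hcr ⟨fun _ => htU, fun _ => hhU⟩
      · -- g ∈ g₀ :: r₂ : head and tail both outside U
        have hgg : g ∈ g₀ :: r₂ := h
        have hhU : G.ohead dir g ∉ U :=
          hUnot _ (List.mem_map_of_mem hgg)
        have htU : G.otail dir g ∉ U := by
          rcases List.mem_cons.1 hgg with rfl | h2
          · exact absurd hgC hg₀C''
          · rcases G.chain_tail_mem hcr2 h2 with h3 | h3
            · rw [h3]
              exact hUnot _ (by rw [List.map_cons]; exact List.mem_cons.2 (Or.inl rfl))
            · exact hUnot _ (by rw [List.map_cons]; exact List.mem_cons_of_mem _ h3)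
        exact hcr ⟨fun hh => absurd hh hhU, fun ht => absurd ht htU⟩
    obtain ⟨U', hcut, hfU', hback⟩ :=
      G.exists_bond ({g | G.crossing U g}.ncard) U f'' le_rfl hcrossf
    have hone : {g | G.crossing U' g} ∩ C'' = {f''} := by
      ext x
      simp only [Set.mem_inter_iff, Set.mem_setOf_eq, Set.mem_singleton_iff]
      constructor
      · rintro ⟨hx1, hx2⟩
        by_contra hxne
        exact hnotcross x hx2 hxne (hback x hx1).1
      · rintro rfl
        exact ⟨hfU', hf''⟩
    have := hall _ hcut
    rw [hone, Set.ncard_singleton] at this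
    exact this rfl

end FGraph
namespace FGraph

variable {V E : Type} (G : FGraph V E)

/-- From a balanced set through `f`, extract a potential cycle through `f`. -/
lemma exists_potcycle [Fintype V] [Fintype E] (F : E → Bool × Bool) (dir : E → Bool)
    {C : Set E}
    (hbal : ∀ v : V, {g | g ∈ C ∧ G.ohead dir g = v}.ncard
      = {g | g ∈ C ∧ G.otail dir g = v}.ncard)
    (hpres : ∀ g ∈ C, (if dir g then (F g).1 else (F g).2) = true)
    {f : E} (hf : f ∈ C) :
    ∃ C' : Set E, G.PotCycle F C' dir ∧ f ∈ C' ∧ C' ⊆ C := by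
  set R : Set V := {v | ∃ l : List E, (∀ g ∈ l, g ∈ C ∧ g ≠ f) ∧
    G.chain dir (G.ohead dir f) l v} with hR
  have hhR : G.ohead dir f ∈ R := ⟨[], by simp, rfl⟩
  have hclosed : ∀ g, g ∈ C → g ≠ f → G.otail dir g ∈ R → G.ohead dir g ∈ R := by
    rintro g hgC hgf ⟨l, hl, hch⟩
    refine ⟨l ++ [g], ?_, G.chain_append hch (G.chain_cons.2 ⟨rfl, rfl⟩)⟩
    intro x hx
    rcases List.mem_append.1 hx with h | h
    · exact hl x h
    · rcases List.mem_cons.1 h with rfl | h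
      · exact ⟨hgC, hgf⟩
      · cases h
  have htR : G.otail dir f ∈ R := by
    by_contra htR
    have hsub : {g | g ∈ C ∧ G.otail dir g ∈ R}
        ⊆ {g | g ∈ C ∧ G.ohead dir g ∈ R} \ {f} := by
      rintro g ⟨hgC, hgt⟩
      have hgf : g ≠ f := by rintro rfl; exact htR hgt
      exact ⟨⟨hgC, hclosed g hgC hgf hgt⟩, hgf⟩
    have hcount := G.balanced_count dir hbal R
    have hfm : f ∈ {g | g ∈ C ∧ G.ohead dir g ∈ R} := ⟨hf, hhR⟩
    have h1 : {g | g ∈ C ∧ G.otail dir g ∈ R}.ncard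
        ≤ ({g | g ∈ C ∧ G.ohead dir g ∈ R} \ {f}).ncard :=
      Set.ncard_le_ncard hsub (Set.toFinite _)
    have h2 : ({g | g ∈ C ∧ G.ohead dir g ∈ R} \ {f}).ncard
        = {g | g ∈ C ∧ G.ohead dir g ∈ R}.ncard - 1 :=
      Set.ncard_diff_singleton_of_mem hfm
    have h3 : 0 < {g | g ∈ C ∧ G.ohead dir g ∈ R}.ncard :=
      (Set.ncard_pos (Set.toFinite _)).2 ⟨f, hfm⟩
    omega
  obtain ⟨l, hl, hchain⟩ := htR
  obtain ⟨l', hc', hsub', hnd⟩ := G.chain_simplify hchain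
  have hclch : G.chain dir (G.otail dir f) (f :: l') (G.otail dir f) :=
    G.chain_cons.2 ⟨rfl, hc'⟩
  have hclnd : ((f :: l').map (G.ohead dir)).Nodup := by
    rw [List.map_cons]; exact hnd
  have hclsub : ∀ g ∈ f :: l', g ∈ C := by
    intro g hg
    rcases List.mem_cons.1 hg with rfl | h
    · exact hf
    · exact (hl g (hsub' g h)).1
  refine ⟨{g | g ∈ f :: l'}, ?_, List.mem_cons_self, hclsub⟩
  exact G.cyclelist_potcycle F dir hclch hclnd (by simp) (fun g hg => hpres g (hclsub g hg))

/-- Relaxed characterization of membership in a potential cut with min `f`. -/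
lemma potcut_min_iff [Fintype V] [Fintype E] [LinearOrder E] (F : E → Bool × Bool)
    (f : E) :
    (∃ C : Set E, G.PotCut F C ∧ f ∈ C ∧ ∀ g ∈ C, f ≤ g) ↔
      (∃ U : Set V, G.crossing U f ∧ ∀ g, G.crossing U g →
        ((G.src g ∈ U → (F g).2 = false) ∧ (G.src g ∉ U → (F g).1 = false)) ∧ f ≤ g) := by
  constructor
  · rintro ⟨C, ⟨hcut, U, hiff, hcond⟩, hfC, hmin⟩
    refine ⟨U, (hiff f).1 hfC, fun g hg => ?_⟩
    have hgC : g ∈ C := (hiff g).2 hg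
    exact ⟨hcond g hgC, hmin g hgC⟩
  · rintro ⟨U, hfU, hprop⟩
    obtain ⟨U', hcut, hfU', hback⟩ :=
      G.exists_bond ({g | G.crossing U g}.ncard) U f le_rfl hfU
    refine ⟨{g | G.crossing U' g}, ⟨hcut, U', fun g => Iff.rfl, ?_⟩, hfU', ?_⟩
    · intro g hg
      obtain ⟨hcr, hside⟩ := hback g hg
      obtain ⟨⟨hc1, hc2⟩, -⟩ := hprop g hcr
      constructor
      · intro h; exact hc1 (hside.1 h)
      · intro h; exact hc2 (fun h2 => h (hside.2 h2))
    · intro g hg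
      exact (hprop g (hback g hg).1).2

/-- Relaxed characterization of membership in a potential cycle with min `f`. -/
lemma potcycle_min_iff [Fintype V] [Fintype E] [LinearOrder E] (F : E → Bool × Bool)
    (f : E) :
    (∃ (C : Set E) (dir : E → Bool), G.PotCycle F C dir ∧ f ∈ C ∧ ∀ g ∈ C, f ≤ g) ↔
      (∃ (C : Set E) (dir : E → Bool),
        (∀ v : V, {g | g ∈ C ∧ G.ohead dir g = v}.ncard
          = {g | g ∈ C ∧ G.otail dir g = v}.ncard) ∧
        (∀ g ∈ C, (if dir g then (F g).1 else (F g).2) = true) ∧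
        f ∈ C ∧ ∀ g ∈ C, f ≤ g) := by
  constructor
  · rintro ⟨C, dir, ⟨hcyc, hbal, hpres⟩, hfC, hmin⟩
    exact ⟨C, dir, hbal, hpres, hfC, hmin⟩
  · rintro ⟨C, dir, hbal, hpres, hfC, hmin⟩
    obtain ⟨C', hpc, hfC', hsub⟩ := G.exists_potcycle F dir hbal hpres hfC
    exact ⟨C', dir, hpc, hfC', fun g hg => hmin g (hsub hg)⟩

end FGraph
namespace FGraph

variable {V E : Type} (G : FGraph V E)

lemma ncard_restrict [Fintype E] (e : E) (P : E → Prop) (hP : ∀ x, P x → x ≠ e) :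
    {g : {x : E // x ≠ e} | P g.1}.ncard = {x | P x}.ncard := by
  rw [← Set.ncard_image_of_injective {g : {x : E // x ≠ e} | P g.1}
    Subtype.val_injective]
  congr 1
  ext x
  simp only [Set.mem_image, Set.mem_setOf_eq]
  constructor
  · rintro ⟨g, hg, rfl⟩; exact hg
  · intro hx; exact ⟨⟨x, hP x hx⟩, hx, rfl⟩

lemma addDir_restrict [DecidableEq E] {e : E} (F : E → Bool × Bool) {f : E}
    (hfe : f ≠ e) (d : Bool) (g : {x : E // x ≠ e}) :
    FGraph.addDir (fun x : {x : E // x ≠ e} => F x.1) ⟨f, hfe⟩ d g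
      = FGraph.addDir F f d g.1 := by
  unfold addDir
  rcases eq_or_ne g ⟨f, hfe⟩ with rfl | hne
  · rw [Function.update_self, Function.update_self]
  · rw [Function.update_of_ne hne,
      Function.update_of_ne (fun h => hne (Subtype.ext h))]

lemma remDir_restrict [DecidableEq E] {e : E} (F : E → Bool × Bool) {f : E}
    (hfe : f ≠ e) (d : Bool) (g : {x : E // x ≠ e}) :
    FGraph.remDir (fun x : {x : E // x ≠ e} => F x.1) ⟨f, hfe⟩ d g
      = FGraph.remDir F f d g.1 := by
  unfold remDir
  rcases eq_or_ne g ⟨f, hfe⟩ with rfl | hne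
  · rw [Function.update_self, Function.update_self]
  · rw [Function.update_of_ne hne,
      Function.update_of_ne (fun h => hne (Subtype.ext h))]

lemma addDir_ne [DecidableEq E] (F : E → Bool × Bool) {f g : E} (h : g ≠ f)
    (d : Bool) : FGraph.addDir F f d g = F g := Function.update_of_ne h _ _

lemma remDir_ne [DecidableEq E] (F : E → Bool × Bool) {f g : E} (h : g ≠ f)
    (d : Bool) : FGraph.remDir F f d g = F g := Function.update_of_ne h _ _

end FGraph
/-- unoriented case of the key lemma: if the maximum edge `e` is
neither an isthmus nor a loop and `e` is unoriented in the fourientation `O`,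
then `I^o(O) = I^o(O−e)`, `I^u(O) = I^u(O−e)`, `L^o(O) = L^o(O−e)` and
`L^b(O) = L^b(O−e)`. -/
theorem unoriented_delete_lemma {V E : Type} [Fintype V] [Fintype E]
    [LinearOrder E] (G : FGraph V E) (σu σb : E → Bool) (e : E)
    (hmax : ∀ f : E, f ≤ e) (hni : ¬ G.IsCut {e}) (hnl : G.src e ≠ G.tgt e)
    (F : E → Bool × Bool) (hun : F e = (false, false)) :
    G.Io F = Subtype.val '' (G.del e).Io (fun f => F f.1) ∧
    G.Iu σu F =
      Subtype.val '' (G.del e).Iu (fun f => σu f.1) (fun f => F f.1) ∧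
    G.Lo F = Subtype.val '' (G.del e).Lo (fun f => F f.1) ∧
    G.Lb σb F =
      Subtype.val '' (G.del e).Lb (fun f => σb f.1) (fun f => F f.1) := by
  refine ⟨?_, ?_, ?_, ?_⟩
  · -- Io
    ext f
    simp only [FGraph.Io, Set.mem_setOf_eq, Set.mem_image]
    constructor
    · rintro ⟨hor, hex⟩
      have hfe : f ≠ e := by
        intro h; rw [h, hun] at hor; exact hor rfl
      rw [G.potcut_min_iff] at hex
      obtain ⟨U, hfU, hprop⟩ := hex
      refine ⟨⟨f, hfe⟩, ⟨hor, ?_⟩, rfl⟩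
      rw [(G.del e).potcut_min_iff]
      refine ⟨U, hfU, fun g hg => ?_⟩
      obtain ⟨hc, hle⟩ := hprop g.1 hg
      exact ⟨hc, Subtype.coe_le_coe.mp hle⟩
    · rintro ⟨g₀, ⟨hor, hex⟩, rfl⟩
      refine ⟨hor, ?_⟩
      rw [(G.del e).potcut_min_iff] at hex
      obtain ⟨U, hfU, hprop⟩ := hex
      rw [G.potcut_min_iff]
      refine ⟨U, hfU, fun g hg => ?_⟩
      by_cases hge : g = e
      · subst hge
        exact ⟨⟨fun _ => by rw [hun], fun _ => by rw [hun]⟩, hmax _⟩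
      · obtain ⟨hc, hle⟩ := hprop ⟨g, hge⟩ hg
        exact ⟨hc, Subtype.coe_le_coe.mpr hle⟩
  · -- Iu
    ext f
    simp only [FGraph.Iu, Set.mem_setOf_eq, Set.mem_image]
    constructor
    · rintro ⟨hfou, hex⟩
      have hfe : f ≠ e := by
        intro h
        obtain ⟨C, hpc, hfC, hmin⟩ := hex
        have hCe : C = {e} := by
          ext g
          simp only [Set.mem_singleton_iff]
          constructor
          · intro hg
            have h1 := hmin g hg
            rw [h] at h1
            exact le_antisymm (hmax g) h1
          · intro hg
            rw [hg, ← h]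
            exact hfC
        exact hni (hCe ▸ hpc.1)
      have hFF := FGraph.addDir_restrict (e := e) F hfe (σu f)
      rw [G.potcut_min_iff] at hex
      obtain ⟨U, hfU, hprop⟩ := hex
      refine ⟨⟨f, hfe⟩, ⟨hfou, ?_⟩, rfl⟩
      rw [(G.del e).potcut_min_iff]
      refine ⟨U, hfU, fun g hg => ?_⟩
      obtain ⟨⟨hc1, hc2⟩, hle⟩ := hprop g.1 hg
      refine ⟨⟨?_, ?_⟩, Subtype.coe_le_coe.mp hle⟩
      · intro h; exact (congrArg Prod.snd (hFF g)).trans (hc1 h)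
      · intro h; exact (congrArg Prod.fst (hFF g)).trans (hc2 h)
    · rintro ⟨g₀, ⟨hfou, hex⟩, rfl⟩
      have hfe : g₀.1 ≠ e := g₀.2
      have hFF := FGraph.addDir_restrict (e := e) F hfe (σu g₀.1)
      refine ⟨hfou, ?_⟩
      rw [(G.del e).potcut_min_iff] at hex
      obtain ⟨U, hfU, hprop⟩ := hex
      rw [G.potcut_min_iff]
      refine ⟨U, hfU, fun g hg => ?_⟩
      by_cases hge : g = e
      · subst hge
        have hFe : FGraph.addDir F g₀.1 (σu g₀.1) g = F g :=
          FGraph.addDir_ne F (fun h => hfe h.symm) _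
        exact ⟨⟨fun _ => by rw [hFe, hun], fun _ => by rw [hFe, hun]⟩, hmax _⟩
      · obtain ⟨⟨hc1, hc2⟩, hle⟩ := hprop ⟨g, hge⟩ hg
        replace hc1 := fun h => (congrArg Prod.snd (hFF ⟨g, hge⟩)).symm.trans (hc1 h)
        replace hc2 := fun h => (congrArg Prod.fst (hFF ⟨g, hge⟩)).symm.trans (hc2 h)
        exact ⟨⟨hc1, hc2⟩, Subtype.coe_le_coe.mpr hle⟩
  · -- Lo
    ext f
    simp only [FGraph.Lo, Set.mem_setOf_eq, Set.mem_image]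
    constructor
    · rintro ⟨hor, hex⟩
      have hfe : f ≠ e := by
        intro h; rw [h, hun] at hor; exact hor rfl
      rw [G.potcycle_min_iff] at hex
      obtain ⟨C, dir, hbal, hpres, hfC, hmin⟩ := hex
      have heC : e ∉ C := by
        intro h
        have := hpres e h
        rw [hun] at this
        rcases hde : dir e <;> rw [hde] at this <;> simp at this
      refine ⟨⟨f, hfe⟩, ⟨hor, ?_⟩, rfl⟩
      rw [(G.del e).potcycle_min_iff]
      refine ⟨{g | g.1 ∈ C}, fun g => dir g.1, fun v => ?_, fun g hg => hpres g.1 hg,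
        hfC, fun g hg => Subtype.coe_le_coe.mp (hmin g.1 hg)⟩
      have h1 := FGraph.ncard_restrict e (fun x => x ∈ C ∧ G.ohead dir x = v)
        (fun x hx => fun h => heC (h ▸ hx.1))
      have h2 := FGraph.ncard_restrict e (fun x => x ∈ C ∧ G.otail dir x = v)
        (fun x hx => fun h => heC (h ▸ hx.1))
      exact h1.trans ((hbal v).trans h2.symm)
    · rintro ⟨g₀, ⟨hor, hex⟩, rfl⟩
      refine ⟨hor, ?_⟩
      rw [(G.del e).potcycle_min_iff] at hex
      obtain ⟨C', dir', hbal, hpres, hfC, hmin⟩ := hex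
      rw [G.potcycle_min_iff]
      set dir : E → Bool := fun x => if h : x = e then true else dir' ⟨x, h⟩ with hdir
      have hdir' : ∀ g : {x : E // x ≠ e}, dir g.1 = dir' g := by
        intro g; rw [hdir]; exact dif_neg g.2
      have hoh : ∀ g : {x : E // x ≠ e},
          G.ohead dir g.1 = (G.del e).ohead dir' g := by
        intro g; unfold FGraph.ohead; rw [hdir' g]; rfl
      have hot : ∀ g : {x : E // x ≠ e},
          G.otail dir g.1 = (G.del e).otail dir' g := by
        intro g; unfold FGraph.otail; rw [hdir' g]; rfl
      refine ⟨Subtype.val '' C', dir, fun v => ?_, ?_, ⟨g₀, hfC, rfl⟩,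
        ?_⟩
      · have e1 : {g | g ∈ Subtype.val '' C' ∧ G.ohead dir g = v}
            = Subtype.val '' {g | g ∈ C' ∧ (G.del e).ohead dir' g = v} := by
          ext x
          simp only [Set.mem_setOf_eq, Set.mem_image]
          constructor
          · rintro ⟨⟨g, hg, rfl⟩, hh⟩
            exact ⟨g, ⟨hg, by rw [← hoh g]; exact hh⟩, rfl⟩
          · rintro ⟨g, ⟨hg, hh⟩, rfl⟩
            exact ⟨⟨g, hg, rfl⟩, by rw [hoh g]; exact hh⟩
        have e2 : {g | g ∈ Subtype.val '' C' ∧ G.otail dir g = v}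
            = Subtype.val '' {g | g ∈ C' ∧ (G.del e).otail dir' g = v} := by
          ext x
          simp only [Set.mem_setOf_eq, Set.mem_image]
          constructor
          · rintro ⟨⟨g, hg, rfl⟩, hh⟩
            exact ⟨g, ⟨hg, by rw [← hot g]; exact hh⟩, rfl⟩
          · rintro ⟨g, ⟨hg, hh⟩, rfl⟩
            exact ⟨⟨g, hg, rfl⟩, by rw [hot g]; exact hh⟩
        rw [e1, e2, Set.ncard_image_of_injective _ Subtype.val_injective,
          Set.ncard_image_of_injective _ Subtype.val_injective]
        exact hbal v
      · rintro g ⟨g', hg', rfl⟩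
        rw [hdir' g']
        exact hpres g' hg'
      · rintro g ⟨g', hg', rfl⟩
        exact Subtype.coe_le_coe.mpr (hmin g' hg')
  · -- Lb
    ext f
    simp only [FGraph.Lb, Set.mem_setOf_eq, Set.mem_image]
    constructor
    · rintro ⟨hfou, hex⟩
      have hfe : f ≠ e := by
        intro h; rw [h, hun] at hfou; simp at hfou
      have hFF := FGraph.remDir_restrict (e := e) F hfe (σb f)
      rw [G.potcycle_min_iff] at hex
      obtain ⟨C, dir, hbal, hpres, hfC, hmin⟩ := hex
      have heC : e ∉ C := by
        intro h
        have hp := hpres e h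
        have hFe : FGraph.remDir F f (σb f) e = F e :=
          FGraph.remDir_ne F (fun h' => hfe h'.symm) _
        rw [hFe, hun] at hp
        rcases hde : dir e <;> rw [hde] at hp <;> simp at hp
      refine ⟨⟨f, hfe⟩, ⟨hfou, ?_⟩, rfl⟩
      rw [(G.del e).potcycle_min_iff]
      refine ⟨{g | g.1 ∈ C}, fun g => dir g.1, fun v => ?_, ?_,
        hfC, fun g hg => Subtype.coe_le_coe.mp (hmin g.1 hg)⟩
      · have h1 := FGraph.ncard_restrict e (fun x => x ∈ C ∧ G.ohead dir x = v)
          (fun x hx => fun h => heC (h ▸ hx.1))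
        have h2 := FGraph.ncard_restrict e (fun x => x ∈ C ∧ G.otail dir x = v)
          (fun x hx => fun h => heC (h ▸ hx.1))
        exact h1.trans ((hbal v).trans h2.symm)
      · intro g hg
        rw [show (fun x : {x : E // x ≠ e} => F x.1) = fun x => F x.1 from rfl]
        have := hpres g.1 hg
        rw [← hFF g] at this
        exact this
    · rintro ⟨g₀, ⟨hfou, hex⟩, rfl⟩
      have hfe : g₀.1 ≠ e := g₀.2
      have hFF := FGraph.remDir_restrict (e := e) F hfe (σb g₀.1)
      refine ⟨hfou, ?_⟩
      rw [(G.del e).potcycle_min_iff] at hex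
      obtain ⟨C', dir', hbal, hpres, hfC, hmin⟩ := hex
      rw [G.potcycle_min_iff]
      set dir : E → Bool := fun x => if h : x = e then true else dir' ⟨x, h⟩ with hdir
      have hdir' : ∀ g : {x : E // x ≠ e}, dir g.1 = dir' g := by
        intro g; rw [hdir]; exact dif_neg g.2
      have hoh : ∀ g : {x : E // x ≠ e},
          G.ohead dir g.1 = (G.del e).ohead dir' g := by
        intro g; unfold FGraph.ohead; rw [hdir' g]; rfl
      have hot : ∀ g : {x : E // x ≠ e},
          G.otail dir g.1 = (G.del e).otail dir' g := by
        intro g; unfold FGraph.otail; rw [hdir' g]; rfl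
      refine ⟨Subtype.val '' C', dir, fun v => ?_, ?_, ⟨g₀, hfC, rfl⟩, ?_⟩
      · have e1 : {g | g ∈ Subtype.val '' C' ∧ G.ohead dir g = v}
            = Subtype.val '' {g | g ∈ C' ∧ (G.del e).ohead dir' g = v} := by
          ext x
          simp only [Set.mem_setOf_eq, Set.mem_image]
          constructor
          · rintro ⟨⟨g, hg, rfl⟩, hh⟩
            exact ⟨g, ⟨hg, by rw [← hoh g]; exact hh⟩, rfl⟩
          · rintro ⟨g, ⟨hg, hh⟩, rfl⟩
            exact ⟨⟨g, hg, rfl⟩, by rw [hoh g]; exact hh⟩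
        have e2 : {g | g ∈ Subtype.val '' C' ∧ G.otail dir g = v}
            = Subtype.val '' {g | g ∈ C' ∧ (G.del e).otail dir' g = v} := by
          ext x
          simp only [Set.mem_setOf_eq, Set.mem_image]
          constructor
          · rintro ⟨⟨g, hg, rfl⟩, hh⟩
            exact ⟨g, ⟨hg, by rw [← hot g]; exact hh⟩, rfl⟩
          · rintro ⟨g, ⟨hg, hh⟩, rfl⟩
            exact ⟨⟨g, hg, rfl⟩, by rw [hot g]; exact hh⟩
        rw [e1, e2, Set.ncard_image_of_injective _ Subtype.val_injective,
          Set.ncard_image_of_injective _ Subtype.val_injective]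
        exact hbal v
      · rintro g ⟨g', hg', rfl⟩
        rw [hdir' g']
        have := hpres g' hg'
        rw [← hFF g']
        exact this
      · rintro g ⟨g', hg', rfl⟩
        exact Subtype.coe_le_coe.mpr (hmin g' hg')
end

section
/- No edge of a graph G can appear in both a potential cut and a potential cycle of the same fourientation O. -/
open scoped Classical

/-- no edge can appear in both a potential cut and a potential
cycle of the same fourientation. -/
theorem potCut_potCycle_disjoint {V E : Type} [Fintype V] [Fintype E]
    (G : MGraph V E) (F : E → Bool × Bool) (C₁ C₂ : Set E) (dir : E → Bool)
    (h₁ : G.PotCut F C₁) (h₂ : G.PotCycle F C₂ dir) (e : E) (he : e ∈ C₁) :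
    e ∉ C₂ := by
  classical
  intro heC₂
  obtain ⟨hcut, U, hC₁, hF⟩ := h₁
  obtain ⟨hcyc, hbal, hdir⟩ := h₂
  set Hin : Set E := {f | f ∈ C₂ ∧ G.ohead dir f ∈ U} with hHin
  set Tin : Set E := {f | f ∈ C₂ ∧ G.otail dir f ∈ U} with hTin
  -- every crossing edge of the cycle goes out of U
  have hsub : Hin ⊆ Tin := by
    rintro f ⟨hf, hhead⟩
    refine ⟨hf, ?_⟩
    by_contra htail
    have hd := hdir f hf
    have hfC₁ : f ∈ C₁ := by
      rw [hC₁ f]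
      unfold MGraph.crossing
      cases hdf : dir f <;>
        simp only [MGraph.ohead, MGraph.otail, hdf, if_true, if_false, Bool.false_eq_true] at hhead htail <;> tauto
    have hcond := hF f hfC₁
    cases hdf : dir f <;>
      simp only [MGraph.ohead, MGraph.otail, hdf, if_true, if_false, Bool.false_eq_true] at hhead htail hd
    · have := hcond.1 hhead; rw [hd] at this; simp at this
    · have := hcond.2 htail; rw [hd] at this; simp at this
  -- counting: heads in U = tails in U among cycle edges
  have hcount : ∀ h : E → V, {f | f ∈ C₂ ∧ h f ∈ U}.ncard
      = ∑ v ∈ Finset.univ.filter (· ∈ U), {f ∈ C₂ | h f = v}.ncard := by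
    intro h
    rw [Set.ncard_eq_toFinset_card']
    rw [Finset.card_eq_sum_card_fiberwise
      (f := h) (t := Finset.univ.filter (· ∈ U)) (by intro x hx; simp_all)]
    refine Finset.sum_congr rfl fun v hv => ?_
    rw [Set.ncard_eq_toFinset_card']
    congr 1
    ext f
    simp only [Finset.mem_filter, Set.mem_toFinset, Set.mem_setOf_eq, Finset.mem_filter] at *
    constructor
    · rintro ⟨⟨h1, _⟩, h3⟩; exact ⟨h1, h3⟩
    · rintro ⟨h1, h3⟩; exact ⟨⟨h1, h3 ▸ (by simpa using hv)⟩, h3⟩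
  have hcard : Hin.ncard = Tin.ncard := by
    rw [hHin, hTin, hcount (G.ohead dir), hcount (G.otail dir)]
    exact Finset.sum_congr rfl fun v _ => hbal v
  have hfin : Tin.Finite := Set.toFinite _
  have heq : Hin = Tin := Set.eq_of_subset_of_ncard_le hsub hcard.ge hfin
  -- but e is a leaving edge: in Tin, not in Hin
  have hd := hdir e heC₂
  have hcond := hF e he
  have hcross : G.crossing U e := (hC₁ e).1 he
  unfold MGraph.crossing at hcross
  have : e ∈ Tin ∧ e ∉ Hin := by
    constructor
    · refine ⟨heC₂, ?_⟩
      cases hde : dir e <;> simp only [hde, Bool.false_eq_true, if_true, if_false] at hd <;>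
        simp only [MGraph.otail, hde, Bool.false_eq_true, if_true, if_false]
      · by_contra htgt
        have hsrc : G.src e ∈ U := by tauto
        have := hcond.1 hsrc; simp [hd] at this
      · by_contra hsrc
        have := hcond.2 hsrc; simp [hd] at this
    · intro ⟨_, hhead⟩
      cases hde : dir e <;> simp only [hde, Bool.false_eq_true, if_true, if_false] at hd <;>
        simp only [MGraph.ohead, hde, Bool.false_eq_true, if_true, if_false] at hhead
      · have := hcond.1 hhead; simp [hd] at this
      · have hsrc : G.src e ∉ U := by tauto
        have := hcond.2 hsrc; simp [hd] at this
  rw [heq] at this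
  exact this.2 this.1
end
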